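/- arXiv:1705.07021 — 8 statements merged into one kernel-verified Lean document; each statement's English description precedes it below -/
import Mathlib

section
/- Every homeomorphism U : X_η → X_η satisfying U ∘ S = S ∘ U is equal to the restriction of some power of the shift, i.e. there exists n ∈ ℤ such that U(y) = S^n(y) for all y ∈ X_η. In other words, the automorphism group of the B-free subshift (X_η, S) is trivial. -/
open scoped BigOperators

-- The (Boolean) indicator function of the `\mathscr{B}`-free integers for
--`\mathscr{B} = {2^i b_i : i \ge 1}`. 
open Classical in
noncomputable def etaB (b : ℕ → ℕ) : ℤ → Bool := fun n =>
  if (∀ i : ℕ, 1 ≤ i → ¬ ((2 : ℤ) ^ i * (b i : ℤ) ∣ n)) then true else false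

-- The orbit closure `X_η` of `η` under the left shift, in the product topology
--on `{0,1}^ℤ`. 
def Xeta (b : ℕ → ℕ) : Set (ℤ → Bool) :=
  closure {y : ℤ → Bool | ∃ n : ℤ, y = fun m => etaB b (m + n)}


namespace BF


/-- finite CRT over a finset of pairwise coprime integer moduli -/
lemma crt (s : Finset ℕ) (m r : ℕ → ℤ)
    (hco : ∀ j ∈ s, ∀ j' ∈ s, j ≠ j' → IsCoprime (m j) (m j')) :
    ∃ t : ℤ, ∀ j ∈ s, m j ∣ t - r j := by
  classical
  induction s using Finset.induction_on with
  | empty => exact ⟨0, by simp⟩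
  | @insert j₀ s hj₀ ih =>
    rcases ih (fun j hj j' hj' hne =>
      hco j (Finset.mem_insert_of_mem hj) j' (Finset.mem_insert_of_mem hj') hne) with ⟨t, ht⟩
    have hP : IsCoprime (∏ j ∈ s, m j) (m j₀) :=
      IsCoprime.prod_left (fun j hj =>
        hco j (Finset.mem_insert_of_mem hj) j₀ (Finset.mem_insert_self _ _)
          (by rintro rfl; exact hj₀ hj))
    rcases hP with ⟨u, v, huv⟩
    set P := ∏ j ∈ s, m j with hPdef
    refine ⟨t + P * (u * (r j₀ - t)), ?_⟩
    intro j hj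
    rcases Finset.mem_insert.1 hj with rfl | hj
    · have : t + P * (u * (r j - t)) - r j = (t - r j) * (1 - u * P) := by ring
      rw [this]
      have h1 : (1 : ℤ) - u * P = v * m j := by linarith [huv]
      rw [h1]
      exact Dvd.intro_left _ rfl |>.mul_left _
    · have h1 : m j ∣ P := Finset.dvd_prod_of_mem m hj
      have h2 : t + P * (u * (r j₀ - t)) - r j = (t - r j) + P * (u * (r j₀ - t)) := by ring
      rw [h2]
      exact dvd_add (ht j hj) (h1.mul_right _)


variable {b : ℕ → ℕ}


def Mi (b : ℕ → ℕ) (i : ℕ) : ℤ := 2 ^ i * (b i : ℤ)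
def Ki (b : ℕ → ℕ) (i : ℕ) : ℤ := 2 * ∏ j ∈ Finset.Icc 1 i, (b j : ℤ)



variable {b : ℕ → ℕ}


lemma etaB_eq_true_iff (n : ℤ) :
    etaB b n = true ↔ ∀ i : ℕ, 1 ≤ i → ¬ (Mi b i ∣ n) := by
  unfold etaB Mi
  split <;> simp_all

lemma etaB_eq_false_iff (n : ℤ) :
    etaB b n = false ↔ ∃ i : ℕ, 1 ≤ i ∧ (Mi b i ∣ n) := by
  rw [← not_iff_not]
  simp only [Bool.not_eq_false, etaB_eq_true_iff]
  push_neg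
  rfl

/-- cylinder sets are open -/
lemma isOpen_cyl (F : Finset ℤ) (x : ℤ → Bool) :
    IsOpen {z : ℤ → Bool | ∀ m ∈ F, z m = x m} := by
  have : {z : ℤ → Bool | ∀ m ∈ F, z m = x m} =
      Set.pi (↑F : Set ℤ) (fun m => {x m}) := by
    ext z; simp [Set.mem_pi]
  rw [this]
  exact isOpen_set_pi (F.finite_toSet) (fun a _ => isOpen_discrete _)

/-- every open set contains a cylinder around each of its points -/
lemma exists_cyl_subset {W : Set (ℤ → Bool)} (hW : IsOpen W) {x : ℤ → Bool}
    (hx : x ∈ W) : ∃ F : Finset ℤ, ∀ z : ℤ → Bool, (∀ m ∈ F, z m = x m) → z ∈ W := by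
  rcases (isOpen_pi_iff.1 hW) x hx with ⟨F, u, hu, hsub⟩
  refine ⟨F, fun z hz => hsub ?_⟩
  intro m hm
  rw [hz m hm]
  exact (hu m hm).2

/-- the key characterization of membership in `Xeta` -/
lemma mem_Xeta_iff {y : ℤ → Bool} :
    y ∈ Xeta b ↔ ∀ F : Finset ℤ, ∃ n : ℤ, ∀ m ∈ F, y m = etaB b (m + n) := by
  constructor
  · intro hy F
    have := (mem_closure_iff.1 hy) _ (isOpen_cyl F y) (by intro m _; rfl)
    rcases this with ⟨z, hz1, n, rfl⟩
    exact ⟨n, fun m hm => (hz1 m hm).symm⟩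
  · intro h
    rw [Xeta, mem_closure_iff]
    intro o ho hyo
    rcases exists_cyl_subset ho hyo with ⟨F, hF⟩
    rcases h F with ⟨n, hn⟩
    exact ⟨fun m => etaB b (m + n), hF _ (fun m hm => (hn m hm).symm), ⟨n, rfl⟩⟩

/-- orbit points are in `Xeta` -/
lemma orbit_mem (n : ℤ) : (fun m => etaB b (m + n)) ∈ Xeta b :=
  subset_closure ⟨n, rfl⟩

lemma eta_mem : etaB b ∈ Xeta b := by
  have := orbit_mem (b := b) 0
  simpa using this

/-- `Xeta` is invariant under all shifts -/
lemma shift_mem {y : ℤ → Bool} (hy : y ∈ Xeta b) (n : ℤ) :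
    (fun m => y (m + n)) ∈ Xeta b := by
  rw [mem_Xeta_iff] at hy ⊢
  intro F
  rcases hy (F.image (fun m => m + n)) with ⟨k, hk⟩
  refine ⟨n + k, fun m hm => ?_⟩
  have := hk (m + n) (Finset.mem_image_of_mem _ hm)
  rw [this]; ring_nf


def Vanish (b : ℕ → ℕ) (y : ℤ → Bool) (i : ℕ) (c : ℤ) : Prop :=
  ∀ m : ℤ, (Mi b i ∣ m - c) → y m = false

/-- the determining window for the vanishing class at level `i` -/
noncomputable def Wnd (b : ℕ → ℕ) (i : ℕ) : Finset ℤ := Finset.Ico 0 (Mi b i * Ki b i)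

lemma vanish_congr {y : ℤ → Bool} {i : ℕ} {c c' : ℤ} (h : Mi b i ∣ c - c')
    (hv : Vanish b y i c) : Vanish b y i c' := by
  intro m hm
  refine hv m ?_
  have he : m - c = (m - c') - (c - c') := by ring
  rw [he]; exact dvd_sub hm h

lemma vanish_eta (i : ℕ) (hi : 1 ≤ i) : Vanish b (etaB b) i 0 := by
  intro m hm
  rw [etaB_eq_false_iff]
  exact ⟨i, hi, by simpa using hm⟩

lemma vanish_shift {y : ℤ → Bool} {i : ℕ} {c : ℤ} (hv : Vanish b y i c) (n : ℤ) :
    Vanish b (fun m => y (m + n)) i (c - n) := by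
  intro m hm
  refine hv (m + n) ?_
  have he : m + n - c = m - (c - n) := by ring
  rw [he]; exact hm

lemma vanish_orbit (i : ℕ) (hi : 1 ≤ i) (n : ℤ) :
    Vanish b (fun m => etaB b (m + n)) i (-n) := by
  have h := vanish_shift (vanish_eta (b := b) i hi) n
  simpa using h

section
variable (hodd : ∀ i : ℕ, 1 ≤ i → Odd (b i))
    (hgt : ∀ i : ℕ, 1 ≤ i → 1 < b i)
    (hcop : ∀ i j : ℕ, 1 ≤ i → 1 ≤ j → i ≠ j → Nat.Coprime (b i) (b j))
include hodd hgt hcop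


lemma cop2b (j : ℕ) (hj : 1 ≤ j) : IsCoprime (2 : ℤ) (b j : ℤ) := by
  have h := hodd j hj
  have : Nat.Coprime 2 (b j) := h.coprime_two_left
  exact_mod_cast Nat.isCoprime_iff_coprime.2 this

lemma copbb (j j' : ℕ) (hj : 1 ≤ j) (hj' : 1 ≤ j') (hne : j ≠ j') :
    IsCoprime (b j : ℤ) (b j' : ℤ) :=
  Nat.isCoprime_iff_coprime.2 (hcop j j' hj hj' hne)

lemma copbMi (i j : ℕ) (hi : 1 ≤ i) (hj : 1 ≤ j) (hne : j ≠ i) :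
    IsCoprime (b j : ℤ) (Mi b i) := by
  refine IsCoprime.mul_right ?_ ?_
  · exact ((cop2b hodd hgt hcop j hj).symm.pow_right)
  · exact copbb hodd hgt hcop j i hj hi hne

lemma b_not_dvd_Mi (i j : ℕ) (hi : 1 ≤ i) (hj : 1 ≤ j) (hne : j ≠ i) :
    ¬ ((b j : ℤ) ∣ Mi b i) := by
  intro hd
  have := (copbMi hodd hgt hcop i j hi hj hne).isUnit_of_dvd' dvd_rfl hd
  rw [Int.isUnit_iff] at this
  have := hgt j hj
  omega

omit hodd hcop in
lemma Mi_pos (i : ℕ) (hi : 1 ≤ i) : 0 < Mi b i := by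
  have h1 := hgt i hi
  have h2 : (0:ℤ) < (b i : ℤ) := by exact_mod_cast Nat.lt_of_lt_of_le Nat.zero_lt_one (le_of_lt h1)
  unfold Mi
  positivity

omit hodd hcop in
lemma Ki_pos (i : ℕ) : 0 < Ki b i := by
  unfold Ki
  have : ∀ j ∈ Finset.Icc 1 i, (0:ℤ) < (b j : ℤ) := by
    intro j hj
    have := hgt j (Finset.mem_Icc.1 hj).1
    exact_mod_cast Nat.lt_of_lt_of_le Nat.zero_lt_one (le_of_lt this)
  have := Finset.prod_pos this
  linarith

omit hodd hgt hcop in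
lemma b_dvd_Ki (i j : ℕ) (hj : 1 ≤ j) (hji : j ≤ i) : (b j : ℤ) ∣ Ki b i := by
  unfold Ki
  exact Dvd.dvd.mul_left (Finset.dvd_prod_of_mem _ (Finset.mem_Icc.2 ⟨hj, hji⟩)) 2

omit hodd hgt hcop in
lemma two_dvd_Ki (i : ℕ) : (2:ℤ) ∣ Ki b i := ⟨_, rfl⟩

open Classical in
lemma avoid (i j : ℕ) (hi : 1 ≤ i) (hj : 1 ≤ j) (hne : j ≠ i) (e t : ℤ)
    (hcong : (b j : ℤ) ∣ t - (if (b j : ℤ) ∣ e then 1 else 0)) :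
    ¬ ((b j : ℤ) ∣ e + t * Mi b i) := by
  intro hd
  set r : ℤ := if (b j : ℤ) ∣ e then 1 else 0 with hr
  have h1 : (b j : ℤ) ∣ (t - r) * Mi b i := hcong.mul_right _
  have h2 : (b j : ℤ) ∣ e + r * Mi b i := by
    have he : e + r * Mi b i = (e + t * Mi b i) - (t - r) * Mi b i := by ring
    rw [he]; exact dvd_sub hd h1
  by_cases hdd : (b j : ℤ) ∣ e
  · rw [hr, if_pos hdd] at h2
    have h3 : (b j : ℤ) ∣ Mi b i := by
      have := dvd_sub h2 hdd
      simpa using this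
    exact b_not_dvd_Mi hodd hgt hcop i j hi hj hne h3
  · rw [hr, if_neg hdd] at h2
    simp only [zero_mul, add_zero] at h2
    exact hdd h2

open Classical in
lemma oneInClass (i : ℕ) (hi : 1 ≤ i) (e : ℤ) (he : ¬ Mi b i ∣ e) :
    ∃ t : ℤ, 0 ≤ t ∧ t < Ki b i ∧
      ∀ j : ℕ, 1 ≤ j → ¬ (Mi b j ∣ e + t * Mi b i) := by
  have hKpos := Ki_pos hgt i
  have hbdvd : ∀ j, (b j : ℤ) ∣ Mi b j := fun j => Dvd.dvd.mul_left dvd_rfl _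
  have h2dvd : ∀ j, (2:ℤ)^j ∣ Mi b j := fun j => Dvd.dvd.mul_right dvd_rfl _
  by_cases h2 : (2:ℤ)^i ∣ e
  · -- case B : 2^i ∣ e, hence b i ∤ e
    have hbi : ¬ ((b i : ℤ) ∣ e) := by
      intro hbd
      exact he (((cop2b hodd hgt hcop i hi).pow_left).mul_dvd h2 hbd)
    set s : Finset ℕ := insert 0 (Finset.Icc 1 (i-1)) with hs
    set mm : ℕ → ℤ := fun j => if j = 0 then 2 else (b j : ℤ) with hmm
    set rr : ℕ → ℤ := fun j => if j = 0 then (if (2:ℤ)^(i+1) ∣ e then 1 else 0)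
        else (if (b j : ℤ) ∣ e then 1 else 0) with hrr
    have hmem : ∀ j ∈ s, j = 0 ∨ (1 ≤ j ∧ j ≤ i - 1) := by
      intro j hj
      rcases Finset.mem_insert.1 hj with rfl | hj
      · exact Or.inl rfl
      · exact Or.inr (Finset.mem_Icc.1 hj)
    have hco : ∀ j ∈ s, ∀ j' ∈ s, j ≠ j' → IsCoprime (mm j) (mm j') := by
      intro j hj j' hj' hne
      rcases hmem j hj with rfl | ⟨hj1, hj2⟩ <;> rcases hmem j' hj' with rfl | ⟨hj1', hj2'⟩
      · exact absurd rfl hne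
      · have h0 : j' ≠ 0 := by omega
        simpa [hmm, h0] using cop2b hodd hgt hcop j' hj1'
      · have h0 : j ≠ 0 := by omega
        simpa [hmm, h0] using (cop2b hodd hgt hcop j hj1).symm
      · have h0 : j ≠ 0 := by omega
        have h0' : j' ≠ 0 := by omega
        simpa [hmm, h0, h0'] using copbb hodd hgt hcop j j' hj1 hj1' hne
    obtain ⟨t₀, ht₀⟩ := crt s mm rr hco
    refine ⟨t₀ % Ki b i, Int.emod_nonneg t₀ (ne_of_gt hKpos), Int.emod_lt_of_pos t₀ hKpos, ?_⟩
    set t := t₀ % Ki b i with htdef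
    have hcongr : ∀ j ∈ s, mm j ∣ t - rr j := by
      intro j hj
      have hK : mm j ∣ Ki b i := by
        rcases hmem j hj with rfl | ⟨hj1, hj2⟩
        · simpa [hmm] using two_dvd_Ki (b := b) i
        · have h0 : j ≠ 0 := by omega
          simpa [hmm, h0] using b_dvd_Ki (b := b) i j hj1 (by omega)
      have h1 : mm j ∣ t - t₀ := by
        have he2 : t - t₀ = -(Ki b i * (t₀ / Ki b i)) := by rw [htdef, Int.emod_def]; ring
        rw [he2]
        exact dvd_neg.2 (hK.mul_right _)
      have he3 : t - rr j = (t - t₀) + (t₀ - rr j) := by ring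
      rw [he3]
      exact dvd_add h1 (ht₀ j hj)
    intro j hj hMdvd
    rcases lt_trichotomy j i with hlt | heq | hgt'
    · have hbj : (b j : ℤ) ∣ e + t * Mi b i := dvd_trans (hbdvd j) hMdvd
      have hmemj : j ∈ s := Finset.mem_insert_of_mem (Finset.mem_Icc.2 ⟨hj, by omega⟩)
      have h0 : j ≠ 0 := by omega
      have hc := hcongr j hmemj
      rw [hmm] at hc
      simp only [h0, if_neg, ite_false] at hc
      rw [hrr] at hc
      simp only [h0, ite_false] at hc
      exact avoid hodd hgt hcop i j hi hj (by omega) e t hc hbj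
    · subst heq
      have hbj : (b j : ℤ) ∣ e := by
        have h4 := dvd_sub (dvd_trans (hbdvd j) hMdvd) ((hbdvd j).mul_left t)
        simpa using h4
      exact hbi hbj
    · have h2j : (2:ℤ)^(i+1) ∣ e + t * Mi b i :=
        dvd_trans (pow_dvd_pow 2 (by omega)) (dvd_trans (h2dvd j) hMdvd)
      have h0mem : (0:ℕ) ∈ s := Finset.mem_insert_self _ _
      have h2t : (2:ℤ) ∣ t - rr 0 := by
        have hc := hcongr 0 h0mem
        rw [hmm] at hc
        simpa using hc
      have hA1 : (2:ℤ)^(i+1) ∣ (t - rr 0) * Mi b i := by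
        obtain ⟨u, hu⟩ := h2t
        refine ⟨u * (b i : ℤ), ?_⟩
        rw [hu, Mi]
        ring
      have h5 : (2:ℤ)^(i+1) ∣ e + rr 0 * Mi b i := by
        have he4 : e + rr 0 * Mi b i = (e + t * Mi b i) - (t - rr 0) * Mi b i := by ring
        rw [he4]
        exact dvd_sub h2j hA1
      by_cases hdd : (2:ℤ)^(i+1) ∣ e
      · have hrr0 : rr 0 = 1 := by simp [hrr, hdd]
        rw [hrr0, one_mul] at h5
        have h6 : (2:ℤ)^(i+1) ∣ Mi b i := by
          have h7 := dvd_sub h5 hdd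
          simpa using h7
        have h8 : (2:ℤ)^i * 2 ∣ 2^i * (b i : ℤ) := by
          rw [← pow_succ]
          exact h6
        have h9 : (2:ℤ) ∣ (b i : ℤ) :=
          (mul_dvd_mul_iff_left (a := (2:ℤ)^i) (by positivity)).1 h8
        have hob : Odd ((b i : ℤ)) := Int.odd_coe_nat (b i) |>.2 (hodd i hi)
        rw [← Int.not_even_iff_odd] at hob
        obtain ⟨u, hu⟩ := h9
        exact hob ⟨u, by omega⟩
      · have hrr0 : rr 0 = 0 := by simp [hrr, hdd]
        rw [hrr0, zero_mul, add_zero] at h5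
        exact hdd h5
  · -- case A : 2^i ∤ e
    have hex : ∃ k, ¬ ((2:ℤ)^(k+1) ∣ e) := ⟨i-1, by rwa [Nat.sub_add_cancel hi]⟩
    set k := Nat.find hex with hkdef
    have hk1 : ¬ ((2:ℤ)^(k+1) ∣ e) := Nat.find_spec hex
    have hkle : k ≤ i - 1 := Nat.find_min' hex (by rwa [Nat.sub_add_cancel hi])
    have hki : k < i := by omega
    have hk2 : (2:ℤ)^k ∣ e := by
      rcases Nat.eq_zero_or_pos k with hk0 | hkpos
      · rw [hk0]; simpa using one_dvd e
      · have := Nat.find_min hex (m := k - 1) (by omega)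
        push_neg at this
        have hke : k - 1 + 1 = k := by omega
        rwa [hke] at this
    set s : Finset ℕ := Finset.Icc 1 k with hs
    set rr : ℕ → ℤ := fun j => if (b j : ℤ) ∣ e then 1 else 0 with hrr
    have hco : ∀ j ∈ s, ∀ j' ∈ s, j ≠ j' → IsCoprime ((fun j => (b j : ℤ)) j) ((fun j => (b j : ℤ)) j') := by
      intro j hj j' hj' hne
      have h1 := Finset.mem_Icc.1 hj
      have h2 := Finset.mem_Icc.1 hj'
      exact copbb hodd hgt hcop j j' h1.1 h2.1 hne
    obtain ⟨t₀, ht₀⟩ := crt s (fun j => (b j : ℤ)) rr hco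
    refine ⟨t₀ % Ki b i, Int.emod_nonneg t₀ (ne_of_gt hKpos), Int.emod_lt_of_pos t₀ hKpos, ?_⟩
    set t := t₀ % Ki b i with htdef
    have hcongr : ∀ j ∈ s, (b j : ℤ) ∣ t - rr j := by
      intro j hj
      have h1 := Finset.mem_Icc.1 hj
      have hK : (b j : ℤ) ∣ Ki b i := b_dvd_Ki (b := b) i j h1.1 (by omega)
      have h2' : (b j : ℤ) ∣ t - t₀ := by
        have he2 : t - t₀ = -(Ki b i * (t₀ / Ki b i)) := by rw [htdef, Int.emod_def]; ring
        rw [he2]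
        exact dvd_neg.2 (hK.mul_right _)
      have he3 : t - rr j = (t - t₀) + (t₀ - rr j) := by ring
      rw [he3]
      exact dvd_add h2' (ht₀ j hj)
    intro j hj hMdvd
    rcases le_or_gt j k with hle | hgt'
    · have hbj : (b j : ℤ) ∣ e + t * Mi b i := dvd_trans (hbdvd j) hMdvd
      have hc := hcongr j (Finset.mem_Icc.2 ⟨hj, hle⟩)
      rw [hrr] at hc
      exact avoid hodd hgt hcop i j hi hj (by omega) e t hc hbj
    · have h2j : (2:ℤ)^(k+1) ∣ e + t * Mi b i :=
        dvd_trans (pow_dvd_pow 2 (by omega)) (dvd_trans (h2dvd j) hMdvd)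
      have hA1 : (2:ℤ)^(k+1) ∣ t * Mi b i := by
        have : (2:ℤ)^(k+1) ∣ Mi b i := dvd_trans (pow_dvd_pow 2 (by omega)) (h2dvd i)
        exact this.mul_left t
      have h5 : (2:ℤ)^(k+1) ∣ e := by
        have he4 : e = (e + t * Mi b i) - t * Mi b i := by ring
        rw [he4]
        exact dvd_sub h2j hA1
      exact hk1 h5


omit hodd hcop in
lemma exists_vanish {y : ℤ → Bool} (hy : y ∈ Xeta b) (i : ℕ) (hi : 1 ≤ i) :
    ∃ c : ℤ, Vanish b y i c := by
  rw [mem_Xeta_iff] at hy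
  have h1 : ∀ N : ℕ, ∃ n : ℤ, ∀ m ∈ Finset.Icc (-(N:ℤ)) (N:ℤ), y m = etaB b (m + n) :=
    fun N => hy _
  choose f hf using h1
  haveI : NeZero (2^i * b i) := ⟨by have h0 := hgt i hi; positivity⟩
  have hfin : ∃ r : ZMod (2^i * b i), ((fun N : ℕ => ((f N : ZMod (2^i * b i)))) ⁻¹' {r}).Infinite := by
    obtain ⟨r, hr⟩ := Finite.exists_infinite_fiber (fun N : ℕ => ((f N : ZMod (2^i * b i))))
    exact ⟨r, Set.infinite_coe_iff.1 hr⟩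
  obtain ⟨r, hr⟩ := hfin
  obtain ⟨N₀, hN₀⟩ := hr.nonempty
  refine ⟨-(f N₀), ?_⟩
  intro m hm
  obtain ⟨N, hN, hNgt⟩ := hr.exists_gt m.natAbs
  have hmem : m ∈ Finset.Icc (-(N:ℤ)) (N:ℤ) := by
    rw [Finset.mem_Icc]
    omega
  have h2 : y m = etaB b (m + f N) := hf N m hmem
  have h3 : ((f N : ℤ) : ZMod (2^i * b i)) = ((f N₀ : ℤ) : ZMod (2^i * b i)) := by
    simp only [Set.mem_preimage, Set.mem_singleton_iff] at hN hN₀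
    rw [hN, hN₀]
  have h4 : ((2^i * b i : ℕ) : ℤ) ∣ f N - f N₀ := by
    rw [ZMod.intCast_eq_intCast_iff] at h3
    exact Int.ModEq.dvd h3.symm
  have h5 : Mi b i ∣ m + f N := by
    have hc : ((2^i * b i : ℕ) : ℤ) = Mi b i := by unfold Mi; push_cast; ring
    rw [hc] at h4
    have he : m + f N = (m - (-(f N₀))) + (f N - f N₀) := by ring
    rw [he]
    exact dvd_add hm h4
  rw [h2, etaB_eq_false_iff]
  exact ⟨i, hi, h5⟩

lemma uniq2 {y : ℤ → Bool} (hy : y ∈ Xeta b) (i : ℕ) (hi : 1 ≤ i) {c c' : ℤ}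
    (hv' : Vanish b y i c')
    (hloc : ∀ m ∈ Wnd b i, Mi b i ∣ m - c → y m = false) :
    Mi b i ∣ c - c' := by
  by_contra hne
  obtain ⟨n, hn⟩ := mem_Xeta_iff.1 hy (Wnd b i)
  have hMpos := Mi_pos hgt i hi
  by_cases hc : Mi b i ∣ c + n
  · -- then ¬ M ∣ c' + n; use the global class c'
    have hc' : ¬ Mi b i ∣ c' + n := by
      intro hd
      apply hne
      have he : c - c' = (c + n) - (c' + n) := by ring
      rw [he]; exact dvd_sub hc hd
    set c₀ := c' % Mi b i with hc₀
    have hd0 : Mi b i ∣ c₀ - c' := by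
      rw [hc₀, Int.emod_def]; exact ⟨-(c'/Mi b i), by ring⟩
    have he' : ¬ Mi b i ∣ c₀ + n := by
      intro hd; apply hc'
      have he : c' + n = (c₀ + n) - (c₀ - c') := by ring
      rw [he]; exact dvd_sub hd hd0
    obtain ⟨t, ht0, htK, hall⟩ := oneInClass hodd hgt hcop i hi (c₀ + n) he'
    set m := c₀ + t * Mi b i with hm
    have h1 : 0 ≤ c₀ := Int.emod_nonneg c' (ne_of_gt hMpos)
    have h2 : c₀ < Mi b i := Int.emod_lt_of_pos c' hMpos
    have hmem : m ∈ Wnd b i := by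
      rw [Wnd, Finset.mem_Ico]
      constructor
      · have := mul_nonneg ht0 (le_of_lt hMpos)
        rw [hm]; nlinarith
      · rw [hm]; nlinarith
    have hfalse : y m = false := by
      refine hv' m ?_
      have he : m - c' = (c₀ - c') + t * Mi b i := by rw [hm]; ring
      rw [he]; exact dvd_add hd0 (Dvd.intro t (mul_comm _ _))
    have htrue : y m = etaB b (m + n) := hn m hmem
    have heta : etaB b (m + n) = true := by
      rw [etaB_eq_true_iff]
      intro j hj
      have hh := hall j hj
      have he : m + n = (c₀ + n) + t * Mi b i := by rw [hm]; ring
      rwa [he]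
    rw [hfalse, heta] at htrue
    exact absurd htrue (by simp)
  · -- ¬ M ∣ c + n: use the local hypothesis
    set c₀ := c % Mi b i with hc₀
    have hd0 : Mi b i ∣ c₀ - c := by
      rw [hc₀, Int.emod_def]; exact ⟨-(c/Mi b i), by ring⟩
    have he' : ¬ Mi b i ∣ c₀ + n := by
      intro hd; apply hc
      have he : c + n = (c₀ + n) - (c₀ - c) := by ring
      rw [he]; exact dvd_sub hd hd0
    obtain ⟨t, ht0, htK, hall⟩ := oneInClass hodd hgt hcop i hi (c₀ + n) he'
    set m := c₀ + t * Mi b i with hm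
    have h1 : 0 ≤ c₀ := Int.emod_nonneg c (ne_of_gt hMpos)
    have h2 : c₀ < Mi b i := Int.emod_lt_of_pos c hMpos
    have hmem : m ∈ Wnd b i := by
      rw [Wnd, Finset.mem_Ico]
      constructor
      · have := mul_nonneg ht0 (le_of_lt hMpos)
        rw [hm]; nlinarith
      · rw [hm]; nlinarith
    have hfalse : y m = false := by
      refine hloc m hmem ?_
      have he : m - c = (c₀ - c) + t * Mi b i := by rw [hm]; ring
      rw [he]; exact dvd_add hd0 (Dvd.intro t (mul_comm _ _))
    have htrue : y m = etaB b (m + n) := hn m hmem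
    have heta : etaB b (m + n) = true := by
      rw [etaB_eq_true_iff]
      intro j hj
      have hh := hall j hj
      have he : m + n = (c₀ + n) + t * Mi b i := by rw [hm]; ring
      rwa [he]
    rw [hfalse, heta] at htrue
    exact absurd htrue (by simp)

lemma vanish_unique {y : ℤ → Bool} (hy : y ∈ Xeta b) (i : ℕ) (hi : 1 ≤ i) {c c' : ℤ}
    (h : Vanish b y i c) (h' : Vanish b y i c') : Mi b i ∣ c - c' :=
  uniq2 hodd hgt hcop hy i hi h' (fun m _ hm => h m hm)

lemma local_to_global {y : ℤ → Bool} (hy : y ∈ Xeta b) (i : ℕ) (hi : 1 ≤ i) {c : ℤ}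
    (hloc : ∀ m ∈ Wnd b i, Mi b i ∣ m - c → y m = false) : Vanish b y i c := by
  obtain ⟨c'', hc''⟩ := exists_vanish hgt hy i hi
  have h1 := uniq2 hodd hgt hcop hy i hi hc'' hloc
  refine vanish_congr ?_ hc''
  have he : c'' - c = -(c - c'') := by ring
  rw [he]; exact dvd_neg.2 h1

omit hodd hgt hcop in
lemma eq_of_pow2 {d : ℤ} (h : ∀ i : ℕ, 1 ≤ i → (2:ℤ)^i ∣ d) : d = 0 := by
  by_contra hd
  have h1 := h (d.natAbs + 1) (by omega)
  have h2 : (2:ℤ)^(d.natAbs+1) ≤ |d| := Int.le_of_dvd (abs_pos.2 hd) ((dvd_abs _ _).2 h1)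
  have h3 : |d| = (d.natAbs : ℤ) := Int.abs_eq_natAbs d
  have h4 : (d.natAbs : ℤ) < 2^(d.natAbs+1) := by
    have h5 : d.natAbs < 2^(d.natAbs+1) :=
      lt_of_lt_of_le (Nat.lt_two_pow_self) (Nat.pow_le_pow_right (by norm_num) (by omega))
    exact_mod_cast h5
  rw [h3] at h2
  linarith

lemma forced_true {y : ℤ → Bool} (hy : y ∈ Xeta b) (c : ℕ → ℤ)
    (hc : ∀ j, 1 ≤ j → Vanish b y j (c j)) (m : ℤ) (i : ℕ) (hi : 1 ≤ i)
    (h2 : ¬ ((2:ℤ)^i ∣ m - c i))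
    (hall : ∀ j, 1 ≤ j → ¬ (Mi b j ∣ m - c j)) : y m = true := by
  classical
  set F : Finset ℤ := insert m ((Finset.Icc 1 i).biUnion (fun j => Wnd b j)) with hF
  obtain ⟨n, hn⟩ := mem_Xeta_iff.1 hy F
  have hnj : ∀ j, 1 ≤ j → j ≤ i → Mi b j ∣ c j + n := by
    intro j hj hji
    have hvo := vanish_orbit (b := b) j hj n
    have hloc : ∀ m' ∈ Wnd b j, Mi b j ∣ m' - c j →
        (fun m'' => etaB b (m'' + n)) m' = false := by
      intro m' hm' hd
      have hm'F : m' ∈ F := by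
        rw [hF]
        exact Finset.mem_insert_of_mem
          (Finset.mem_biUnion.2 ⟨j, Finset.mem_Icc.2 ⟨hj, hji⟩, hm'⟩)
      have h6 := hn m' hm'F
      simp only at h6 ⊢
      rw [← h6]
      exact hc j hj m' hd
    have h7 := uniq2 hodd hgt hcop (orbit_mem n) j hj hvo hloc
    simpa [sub_neg_eq_add] using h7
  have hym : y m = etaB b (m + n) := hn m (by rw [hF]; exact Finset.mem_insert_self _ _)
  rw [hym, etaB_eq_true_iff]
  intro j hj hdvd
  rcases le_or_gt j i with hji | hji
  · apply hall j hj
    have he : m - c j = (m + n) - (c j + n) := by ring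
    rw [he]; exact dvd_sub hdvd (hnj j hj hji)
  · apply h2
    have h2i : (2:ℤ)^i ∣ m + n :=
      dvd_trans (pow_dvd_pow 2 (le_of_lt hji)) (dvd_trans (dvd_mul_right _ _) hdvd)
    have h2c : (2:ℤ)^i ∣ c i + n :=
      dvd_trans (dvd_mul_right _ _) (hnj i hi le_rfl)
    have he : m - c i = (m + n) - (c i + n) := by ring
    rw [he]; exact dvd_sub h2i h2c

lemma differ_struct {y y' : ℤ → Bool} (hy : y ∈ Xeta b) (hy' : y' ∈ Xeta b) (c : ℕ → ℤ)
    (hc : ∀ j, 1 ≤ j → Vanish b y j (c j)) (hc' : ∀ j, 1 ≤ j → Vanish b y' j (c j))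
    (m : ℤ) (hm : y m ≠ y' m) :
    (∀ i, 1 ≤ i → (2:ℤ)^i ∣ m - c i) ∧ (∀ j, 1 ≤ j → ¬ (Mi b j ∣ m - c j)) := by
  have hall : ∀ j, 1 ≤ j → ¬ (Mi b j ∣ m - c j) := by
    intro j hj hd
    exact hm (by rw [hc j hj m hd, hc' j hj m hd])
  refine ⟨?_, hall⟩
  intro i hi
  by_contra h2
  exact hm (by rw [forced_true hodd hgt hcop hy c hc m i hi h2 hall,
    forced_true hodd hgt hcop hy' c hc' m i hi h2 hall])

lemma exists_gamma (i : ℕ) (hi : 1 ≤ i) (r : ℤ) :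
    ∃ γ : ℤ, ((2:ℤ)^i ∣ γ) ∧ ((b i : ℤ) ∣ γ - r) := by
  obtain ⟨u, v, huv⟩ := (IsCoprime.pow_left (m := i) (cop2b hodd hgt hcop i hi))
  exact ⟨u * 2^i * r, ⟨u * r, by ring⟩, ⟨-(v*r), by linear_combination (r : ℤ) * huv⟩⟩

end

open Classical in
/-- candidate two-point fiber elements -/
noncomputable def pairF (b : ℕ → ℕ) (ρ : ℕ → ℤ) (ε : Bool) : ℤ → Bool := fun m =>
  if m = 0 then ε
  else if ∃ j, 1 ≤ j ∧ ((2:ℤ)^j ∣ m ∧ (b j : ℤ) ∣ m - ρ j) then false else true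

section
variable (hodd : ∀ i : ℕ, 1 ≤ i → Odd (b i))
    (hgt : ∀ i : ℕ, 1 ≤ i → 1 < b i)
    (hcop : ∀ i j : ℕ, 1 ≤ i → 1 ≤ j → i ≠ j → Nat.Coprime (b i) (b j))
include hodd hgt hcop

lemma pairF_mem (ρ : ℕ → ℤ) (hρ : ∀ j, 1 ≤ j → ¬ ((b j : ℤ) ∣ ρ j)) (ε : Bool) :
    pairF b ρ ε ∈ Xeta b := by
  classical
  rw [mem_Xeta_iff]
  intro F
  set S := F.sup (fun m => m.natAbs) with hS
  set N := S + 1 with hN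
  have hN1 : 1 ≤ N := by omega
  have hmN : ∀ m ∈ F, m.natAbs < 2^N := by
    intro m hm
    calc m.natAbs ≤ S := Finset.le_sup hm
    _ < 2^S := Nat.lt_two_pow_self
    _ ≤ 2^N := Nat.pow_le_pow_right (by norm_num) (by omega)
  -- CRT
  set s : Finset ℕ := insert 0 (Finset.Icc 1 (N+1)) with hs
  set mm : ℕ → ℤ := fun j => if j = 0 then (2:ℤ)^(N+1) else (b j : ℤ) with hmm
  set rr : ℕ → ℤ := fun j => if j = 0 then (if ε then (2:ℤ)^N else 0)
      else if j = N+1 then 0 else -ρ j with hrr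
  have hmem : ∀ j ∈ s, j = 0 ∨ (1 ≤ j ∧ j ≤ N+1) := by
    intro j hj
    rcases Finset.mem_insert.1 hj with rfl | hj
    · exact Or.inl rfl
    · exact Or.inr (Finset.mem_Icc.1 hj)
  have hco : ∀ j ∈ s, ∀ j' ∈ s, j ≠ j' → IsCoprime (mm j) (mm j') := by
    intro j hj j' hj' hne
    rcases hmem j hj with rfl | ⟨hj1, hj2⟩ <;> rcases hmem j' hj' with rfl | ⟨hj1', hj2'⟩
    · exact absurd rfl hne
    · have h0 : j' ≠ 0 := by omega
      simpa [hmm, h0] using (cop2b hodd hgt hcop j' hj1').pow_left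
    · have h0 : j ≠ 0 := by omega
      simpa [hmm, h0] using ((cop2b hodd hgt hcop j hj1).pow_left).symm
    · have h0 : j ≠ 0 := by omega
      have h0' : j' ≠ 0 := by omega
      simpa [hmm, h0, h0'] using copbb hodd hgt hcop j j' hj1 hj1' hne
  obtain ⟨t, ht⟩ := crt s mm rr hco
  have f2 : (2:ℤ)^(N+1) ∣ t - (if ε then (2:ℤ)^N else 0) := by
    have h := ht 0 (Finset.mem_insert_self _ _)
    simpa [hmm, hrr] using h
  have fb : ∀ j, 1 ≤ j → j ≤ N → (b j : ℤ) ∣ t + ρ j := by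
    intro j hj hjN
    have hjmem : j ∈ s := Finset.mem_insert_of_mem (Finset.mem_Icc.2 ⟨hj, by omega⟩)
    have h0 : j ≠ 0 := by omega
    have hN1' : j ≠ N+1 := by omega
    have h := ht j hjmem
    simp only [hmm, hrr, h0, hN1', if_false, ite_false] at h
    simpa [sub_neg_eq_add] using h
  have fbN : ε = false → (b (N+1) : ℤ) ∣ t := by
    intro _
    have hjmem : (N+1) ∈ s := Finset.mem_insert_of_mem (Finset.mem_Icc.2 ⟨by omega, le_rfl⟩)
    have h := ht (N+1) hjmem
    have h0 : N+1 ≠ 0 := by omega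
    simp only [hmm, hrr, h0, if_false, ite_false, if_pos rfl, ite_true, sub_zero] at h
    simpa using h
  have h2N : (2:ℤ)^N ∣ t := by
    cases ε
    · simp only [if_neg Bool.false_ne_true, sub_zero] at f2
      exact dvd_trans (pow_dvd_pow 2 (by omega)) f2
    · simp only [if_pos rfl] at f2
      have : t = (t - 2^N) + 2^N := by ring
      rw [this]
      exact dvd_add (dvd_trans (pow_dvd_pow 2 (by omega)) f2) (pow_dvd_pow 2 (by omega))
  have h2N1t : ε = true → ¬ ((2:ℤ)^(N+1) ∣ t) := by
    intro hε hdvd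
    rw [hε] at f2
    simp only [if_pos rfl] at f2
    have h1 : (2:ℤ)^(N+1) ∣ (2:ℤ)^N := by
      have : (2:ℤ)^N = t - (t - 2^N) := by ring
      rw [this]
      exact dvd_sub hdvd f2
    have h2 := Int.le_of_dvd (by positivity) h1
    have h3 : (2:ℤ)^N < 2^(N+1) := by
      have : (2:ℤ)^N ≥ 1 := one_le_pow₀ (by norm_num)
      calc (2:ℤ)^N < 2^N * 2 := by linarith
      _ = 2^(N+1) := (pow_succ 2 N).symm
    linarith
  have h2N1f : ε = false → (2:ℤ)^(N+1) ∣ t := by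
    intro hε
    rw [hε] at f2
    simpa using f2
  refine ⟨t, fun m hmF => ?_⟩
  by_cases hm0 : m = 0
  · subst hm0
    rw [pairF, if_pos rfl, zero_add]
    cases ε
    · symm
      rw [etaB_eq_false_iff]
      refine ⟨N+1, by omega, ?_⟩
      rw [Mi]
      exact IsCoprime.mul_dvd ((cop2b hodd hgt hcop (N+1) (by omega)).pow_left)
        (h2N1f rfl) (fbN rfl)
    · symm
      rw [etaB_eq_true_iff]
      intro j hj hdvd
      rcases le_or_gt j N with hjN | hjN
      · have hbj : (b j : ℤ) ∣ t := dvd_trans (dvd_mul_left _ _) hdvd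
        apply hρ j hj
        have : (ρ j : ℤ) = (t + ρ j) - t := by ring
        rw [this]
        exact dvd_sub (fb j hj hjN) hbj
      · apply h2N1t rfl
        exact dvd_trans (pow_dvd_pow 2 (by omega)) (dvd_trans (dvd_mul_right _ _) hdvd)
  · have hmabs : m.natAbs < 2^N := hmN m hmF
    have habs : |m| < (2:ℤ)^N := by
      have h1 : ((m.natAbs : ℤ)) < ((2^N : ℕ) : ℤ) := by exact_mod_cast hmabs
      rw [Int.abs_eq_natAbs]
      push_cast at h1 ⊢
      exact h1
    have key1 : ∀ j, 1 ≤ j → ((2:ℤ)^j ∣ m ∧ (b j : ℤ) ∣ m - ρ j) → Mi b j ∣ m + t := by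
      intro j hj ⟨hj2, hjb⟩
      have hjN : j ≤ N := by
        by_contra hc
        have h1 := Int.le_of_dvd (abs_pos.2 hm0) ((dvd_abs _ _).2 hj2)
        have h2 : (2:ℤ)^N ≤ 2^j := pow_le_pow_right₀ (by norm_num) (by omega)
        linarith
      rw [Mi]
      refine IsCoprime.mul_dvd ((cop2b hodd hgt hcop j hj).pow_left) ?_ ?_
      · exact dvd_add hj2 (dvd_trans (pow_dvd_pow 2 hjN) h2N)
      · have : m + t = (m - ρ j) + (t + ρ j) := by ring
        rw [this]
        exact dvd_add hjb (fb j hj hjN)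
    have key2 : ∀ j, 1 ≤ j → Mi b j ∣ m + t → ((2:ℤ)^j ∣ m ∧ (b j : ℤ) ∣ m - ρ j) := by
      intro j hj hdvd
      have hjN : j ≤ N := by
        by_contra hc
        have h1 : (2:ℤ)^N ∣ m + t :=
          dvd_trans (pow_dvd_pow 2 (by omega)) (dvd_trans (dvd_mul_right _ _) hdvd)
        have h2 : (2:ℤ)^N ∣ m := by
          have : m = (m + t) - t := by ring
          rw [this]
          exact dvd_sub h1 h2N
        have h3 := Int.le_of_dvd (abs_pos.2 hm0) ((dvd_abs _ _).2 h2)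
        linarith
      constructor
      · have h1 : (2:ℤ)^j ∣ m + t := dvd_trans (dvd_mul_right _ _) hdvd
        have h2 : (2:ℤ)^j ∣ t := dvd_trans (pow_dvd_pow 2 hjN) h2N
        have : m = (m + t) - t := by ring
        rw [this]
        exact dvd_sub h1 h2
      · have h1 : (b j : ℤ) ∣ m + t := dvd_trans (dvd_mul_left _ _) hdvd
        have : m - ρ j = (m + t) - (t + ρ j) := by ring
        rw [this]
        exact dvd_sub h1 (fb j hj hjN)
    rw [pairF, if_neg hm0]
    by_cases hex : ∃ j, 1 ≤ j ∧ ((2:ℤ)^j ∣ m ∧ (b j : ℤ) ∣ m - ρ j)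
    · rw [if_pos hex]
      obtain ⟨j, hj, hjc⟩ := hex
      symm
      rw [etaB_eq_false_iff]
      exact ⟨j, hj, key1 j hj hjc⟩
    · rw [if_neg hex]
      symm
      rw [etaB_eq_true_iff]
      intro j hj hdvd
      exact hex ⟨j, hj, key2 j hj hdvd⟩

lemma pairF_vanish (ρ : ℕ → ℤ) (hρ : ∀ j, 1 ≤ j → ¬ ((b j : ℤ) ∣ ρ j)) (ε : Bool)
    (i : ℕ) (hi : 1 ≤ i) (γ : ℤ) (hγ2 : (2:ℤ)^i ∣ γ) (hγb : (b i : ℤ) ∣ γ - ρ i) :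
    Vanish b (pairF b ρ ε) i γ := by
  intro m hm
  have h2 : (2:ℤ)^i ∣ m := by
    have h1 : (2:ℤ)^i ∣ m - γ := dvd_trans (dvd_mul_right _ _) hm
    have : m = (m - γ) + γ := by ring
    rw [this]; exact dvd_add h1 hγ2
  have hb : (b i : ℤ) ∣ m - ρ i := by
    have h1 : (b i : ℤ) ∣ m - γ := dvd_trans (dvd_mul_left _ _) hm
    have : m - ρ i = (m - γ) + (γ - ρ i) := by ring
    rw [this]; exact dvd_add h1 hγb
  have hm0 : m ≠ 0 := by
    rintro rfl
    apply hρ i hi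
    have : (b i : ℤ) ∣ -ρ i := by simpa using hb
    exact dvd_neg.1 this
  rw [pairF, if_neg hm0, if_pos ⟨i, hi, h2, hb⟩]

end

section UPart
variable (hodd : ∀ i : ℕ, 1 ≤ i → Odd (b i))
    (hgt : ∀ i : ℕ, 1 ≤ i → 1 < b i)
    (hcop : ∀ i j : ℕ, 1 ≤ i → 1 ≤ j → i ≠ j → Nat.Coprime (b i) (b j))
    (U : ↥(Xeta b) ≃ₜ ↥(Xeta b))
    (hcomm : ∀ y z : ↥(Xeta b),
      (z : ℤ → Bool) = (fun m => (y : ℤ → Bool) (m + 1)) →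
        ((U z : ℤ → Bool)) = fun m => (U y : ℤ → Bool) (m + 1))

omit hodd hgt hcop in
include hcomm in
lemma hcommZ : ∀ (n : ℤ) (y z : ↥(Xeta b)),
    ((z : ℤ → Bool) = fun m => (y : ℤ → Bool) (m + n)) →
    ((U z : ℤ → Bool) = fun m => (U y : ℤ → Bool) (m + n)) := by
  intro n
  induction n using Int.induction_on with
  | zero =>
    intro y z hz
    have hzy : z = y := by
      apply Subtype.ext
      rw [hz]; funext m; rw [add_zero]
    subst hzy
    funext m; rw [add_zero]
  | succ i ih =>
    intro y z hz
    set w : ↥(Xeta b) := ⟨fun m => (y : ℤ → Bool) (m + i), shift_mem y.2 i⟩ with hw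
    have h1 : (z : ℤ → Bool) = fun m => (w : ℤ → Bool) (m + 1) := by
      rw [hz]; funext m
      show (y : ℤ → Bool) (m + (i + 1)) = (y : ℤ → Bool) (m + 1 + i)
      congr 1; ring
    have h2 := hcomm w z h1
    have h3 := ih y w rfl
    rw [h2, h3]
    funext m
    show (U y : ℤ → Bool) (m + 1 + i) = (U y : ℤ → Bool) (m + (i + 1))
    congr 1; ring
  | pred i ih =>
    intro y z hz
    set w : ↥(Xeta b) := ⟨fun m => (z : ℤ → Bool) (m + 1), shift_mem z.2 1⟩ with hw
    have h1 : (w : ℤ → Bool) = fun m => (y : ℤ → Bool) (m + (-(i:ℤ))) := by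
      funext m
      show (z : ℤ → Bool) (m + 1) = (y : ℤ → Bool) (m + (-(i:ℤ)))
      rw [hz]
      show (y : ℤ → Bool) (m + 1 + (-(i:ℤ) - 1)) = (y : ℤ → Bool) (m + (-(i:ℤ)))
      congr 1; ring
    have h2 := ih y w h1
    have h3 := hcomm z w rfl
    funext m
    have h4 := congrFun h2 (m - 1)
    have h5 := congrFun h3 (m - 1)
    rw [h4] at h5
    have h6 : m - 1 + 1 = m := by ring
    rw [h6] at h5
    rw [← h5]
    congr 1; ring

omit hodd hgt hcop hcomm in
lemma contU : ∀ (y : ↥(Xeta b)) (F : Finset ℤ), ∃ F' : Finset ℤ,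
    ∀ y' : ↥(Xeta b), (∀ m ∈ F', (y' : ℤ → Bool) m = (y : ℤ → Bool) m) →
      ∀ m ∈ F, (U y' : ℤ → Bool) m = (U y : ℤ → Bool) m := by
  intro y F
  have hV : IsOpen {z : ℤ → Bool | ∀ m ∈ F, z m = (U y : ℤ → Bool) m} :=
    isOpen_cyl F _
  have hg : Continuous (fun w : ↥(Xeta b) => (U w : ℤ → Bool)) :=
    U.continuous.subtype_val
  have hopen : IsOpen ((fun w : ↥(Xeta b) => (U w : ℤ → Bool)) ⁻¹'
      {z : ℤ → Bool | ∀ m ∈ F, z m = (U y : ℤ → Bool) m}) := hV.preimage hg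
  rw [isOpen_induced_iff] at hopen
  obtain ⟨W, hW, hWeq⟩ := hopen
  have hyW : (y : ℤ → Bool) ∈ W := by
    have : y ∈ Subtype.val ⁻¹' W := by
      rw [hWeq]; intro m hm; rfl
    exact this
  obtain ⟨F', hF'⟩ := exists_cyl_subset hW hyW
  refine ⟨F', fun y' hagree m hm => ?_⟩
  have h1 : (y' : ℤ → Bool) ∈ W := hF' _ hagree
  have h2 : y' ∈ Subtype.val ⁻¹' W := h1
  rw [hWeq] at h2
  exact h2 m hm

/-- the point `η` of the subshift -/
noncomputable def etaPt (b : ℕ → ℕ) : ↥(Xeta b) := ⟨etaB b, eta_mem⟩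

/-- orbit points of `η` -/
noncomputable def orbitPt (b : ℕ → ℕ) (n : ℤ) : ↥(Xeta b) := ⟨fun m => etaB b (m + n), orbit_mem n⟩

include hodd hgt hcop hcomm in
lemma const_orbit (cU : ℕ → ℤ)
    (hcU : ∀ i : ℕ, 1 ≤ i → Vanish b (↑(U (etaPt b))) i (cU i))
    (i : ℕ) (hi : 1 ≤ i) (n : ℤ) (cy : ℤ)
    (hvy : Vanish b (↑(orbitPt b n)) i cy) :
    Vanish b (↑(U (orbitPt b n))) i (cy + cU i) := by
  have h1 : Mi b i ∣ cy - (-n) :=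
    vanish_unique hodd hgt hcop (orbitPt b n).2 i hi hvy (vanish_orbit i hi n)
  have h2 : (↑(U (orbitPt b n)) : ℤ → Bool) = fun m => (U (etaPt b) : ℤ → Bool) (m + n) :=
    hcommZ U hcomm n (etaPt b) (orbitPt b n) rfl
  rw [h2]
  have h3 : Vanish b (fun m => (U (etaPt b) : ℤ → Bool) (m + n)) i (cU i - n) :=
    vanish_shift (hcU i hi) n
  refine vanish_congr ?_ h3
  have he : cU i - n - (cy + cU i) = -(cy - -n) := by ring
  rw [he]; exact dvd_neg.2 h1

include hodd hgt hcop hcomm in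
lemma const_shiftU (cU : ℕ → ℤ)
    (hcU : ∀ i : ℕ, 1 ≤ i → Vanish b (↑(U (etaPt b))) i (cU i))
    (i : ℕ) (hi : 1 ≤ i) (y : ↥(Xeta b)) (cy : ℤ)
    (hvy : Vanish b (↑y) i cy) :
    Vanish b (↑(U y)) i (cy + cU i) := by
  obtain ⟨F', hF'⟩ := contU U y (Wnd b i)
  obtain ⟨n, hn⟩ := mem_Xeta_iff.1 y.2 (F' ∪ Wnd b i)
  set o : ↥(Xeta b) := orbitPt b n with ho
  -- o agrees with y on F' ∪ Wnd b i
  have hagree : ∀ m ∈ F' ∪ Wnd b i, (o : ℤ → Bool) m = (y : ℤ → Bool) m := by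
    intro m hm
    exact (hn m hm).symm
  -- the class of o is congruent to cy
  have hvo : Vanish b (↑o) i (-n) := vanish_orbit i hi n
  have hloc : ∀ m ∈ Wnd b i, Mi b i ∣ m - cy → (o : ℤ → Bool) m = false := by
    intro m hm hd
    rw [hagree m (Finset.mem_union_right _ hm)]
    exact hvy m hd
  have h1 : Mi b i ∣ cy - (-n) := uniq2 hodd hgt hcop o.2 i hi hvo hloc
  -- transport Vanish of U o
  have h2 : Vanish b (↑(U o)) i ((-n) + cU i) :=
    const_orbit hodd hgt hcop U hcomm cU hcU i hi n (-n) hvo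
  -- U y agrees with U o on Wnd b i
  have h3 : ∀ m ∈ Wnd b i, (U o : ℤ → Bool) m = (U y : ℤ → Bool) m :=
    hF' o (fun m hm => hagree m (Finset.mem_union_left _ hm))
  have hloc2 : ∀ m ∈ Wnd b i, Mi b i ∣ m - ((-n) + cU i) → (U y : ℤ → Bool) m = false := by
    intro m hm hd
    rw [← h3 m hm]
    exact h2 m hd
  have h4 : Vanish b (↑(U y)) i ((-n) + cU i) :=
    local_to_global hodd hgt hcop (U y).2 i hi hloc2
  refine vanish_congr ?_ h4
  have he : (-n) + cU i - (cy + cU i) = -(cy - -n) := by ring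
  rw [he]; exact dvd_neg.2 h1

end UPart

end BF

theorem automorphism_group_trivial (b : ℕ → ℕ)
    (hodd : ∀ i : ℕ, 1 ≤ i → Odd (b i))
    (hgt : ∀ i : ℕ, 1 ≤ i → 1 < b i)
    (hcop : ∀ i j : ℕ, 1 ≤ i → 1 ≤ j → i ≠ j → Nat.Coprime (b i) (b j))
    (U : ↥(Xeta b) ≃ₜ ↥(Xeta b))
    (hcomm : ∀ y z : ↥(Xeta b),
      (z : ℤ → Bool) = (fun m => (y : ℤ → Bool) (m + 1)) →
        ((U z : ℤ → Bool)) = fun m => (U y : ℤ → Bool) (m + 1)) :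
    ∃ n : ℤ, ∀ y : ↥(Xeta b), (U y : ℤ → Bool) = fun m => (y : ℤ → Bool) (m + n) := by
  classical
  open BF in
  have hcUex : ∀ i : ℕ, ∃ c : ℤ, 1 ≤ i → Vanish b (↑(U (etaPt b))) i c := by
    intro i
    by_cases hi : 1 ≤ i
    · obtain ⟨c, hc⟩ := exists_vanish hgt (U (etaPt b)).2 i hi
      exact ⟨c, fun _ => hc⟩
    · exact ⟨0, fun h => absurd h hi⟩
  have hcUex := hcUex
  choose cU hcU using hcUex
  have hρ1 : ∀ j, 1 ≤ j → ¬ ((b j : ℤ) ∣ (1:ℤ)) := by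
    intro j hj hd
    have h1 := Int.le_of_dvd one_pos hd
    have h2 := hgt j hj
    omega
  have hγ1ex : ∀ i : ℕ, ∃ γ : ℤ, 1 ≤ i → (((2:ℤ)^i ∣ γ) ∧ ((b i : ℤ) ∣ γ - 1)) := by
    intro i
    by_cases hi : 1 ≤ i
    · obtain ⟨γ, h⟩ := BF.exists_gamma hodd hgt hcop i hi 1
      exact ⟨γ, fun _ => h⟩
    · exact ⟨0, fun h => absurd h hi⟩
  choose γ1 hγ1 using hγ1ex
  set ρ1 : ℕ → ℤ := fun _ => (1:ℤ) with hρ1def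
  set y0 : ↥(Xeta b) :=
    ⟨BF.pairF b ρ1 false, BF.pairF_mem hodd hgt hcop ρ1 (fun j hj => hρ1 j hj) false⟩ with hy0
  set y1 : ↥(Xeta b) :=
    ⟨BF.pairF b ρ1 true, BF.pairF_mem hodd hgt hcop ρ1 (fun j hj => hρ1 j hj) true⟩ with hy1
  have hv0 : ∀ j, 1 ≤ j → BF.Vanish b (↑y0) j (γ1 j) := fun j hj =>
    BF.pairF_vanish hodd hgt hcop ρ1 (fun j' hj' => hρ1 j' hj') false j hj (γ1 j)
      (hγ1 j hj).1 (hγ1 j hj).2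
  have hv1 : ∀ j, 1 ≤ j → BF.Vanish b (↑y1) j (γ1 j) := fun j hj =>
    BF.pairF_vanish hodd hgt hcop ρ1 (fun j' hj' => hρ1 j' hj') true j hj (γ1 j)
      (hγ1 j hj).1 (hγ1 j hj).2
  have hU0 : ∀ j, 1 ≤ j → BF.Vanish b (↑(U y0)) j (γ1 j + cU j) := fun j hj =>
    BF.const_shiftU hodd hgt hcop U hcomm cU hcU j hj y0 (γ1 j) (hv0 j hj)
  have hU1 : ∀ j, 1 ≤ j → BF.Vanish b (↑(U y1)) j (γ1 j + cU j) := fun j hj =>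
    BF.const_shiftU hodd hgt hcop U hcomm cU hcU j hj y1 (γ1 j) (hv1 j hj)
  have hne01 : ∃ m : ℤ, (↑(U y0) : ℤ → Bool) m ≠ (↑(U y1) : ℤ → Bool) m := by
    by_contra h
    push_neg at h
    have heq : U y0 = U y1 := Subtype.ext (funext h)
    have heq2 : y0 = y1 := (EquivLike.injective U) heq
    have hval : (↑y0 : ℤ → Bool) 0 = (↑y1 : ℤ → Bool) 0 := by rw [heq2]
    simp [hy0, hy1, BF.pairF] at hval
  obtain ⟨d, hd⟩ := hne01
  obtain ⟨hA, hB⟩ := BF.differ_struct hodd hgt hcop (U y0).2 (U y1).2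
    (fun j => γ1 j + cU j) hU0 hU1 d hd
  have hd2 : ∀ i, 1 ≤ i → (2:ℤ)^i ∣ d - cU i := by
    intro i hi
    have h1 := hA i hi
    have h2 := (hγ1 i hi).1
    have he : d - cU i = (d - (γ1 i + cU i)) + γ1 i := by ring
    rw [he]; exact dvd_add h1 h2
  have hkey : ∀ j₀, 1 ≤ j₀ → (b j₀ : ℤ) ∣ d - cU j₀ := by
    intro j₀ hj₀
    by_contra hnd
    set ρ' : ℕ → ℤ := fun j => if j = j₀ then d - cU j₀ else 1 with hρ'def
    have hρ' : ∀ j, 1 ≤ j → ¬ ((b j : ℤ) ∣ ρ' j) := by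
      intro j hj
      by_cases hjj : j = j₀
      · subst hjj; simp only [hρ'def, if_pos rfl]; exact hnd
      · simp only [hρ'def, if_neg hjj]; exact hρ1 j hj
    have hγ'ex : ∀ i : ℕ, ∃ γ : ℤ, 1 ≤ i → (((2:ℤ)^i ∣ γ) ∧ ((b i : ℤ) ∣ γ - ρ' i)) := by
      intro i
      by_cases hi : 1 ≤ i
      · obtain ⟨γ, h⟩ := BF.exists_gamma hodd hgt hcop i hi (ρ' i)
        exact ⟨γ, fun _ => h⟩
      · exact ⟨0, fun h => absurd h hi⟩
    choose γ' hγ' using hγ'ex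
    set z0 : ↥(Xeta b) := ⟨BF.pairF b ρ' false, BF.pairF_mem hodd hgt hcop ρ' hρ' false⟩ with hz0
    set z1 : ↥(Xeta b) := ⟨BF.pairF b ρ' true, BF.pairF_mem hodd hgt hcop ρ' hρ' true⟩ with hz1
    have hvz0 : ∀ j, 1 ≤ j → BF.Vanish b (↑z0) j (γ' j) := fun j hj =>
      BF.pairF_vanish hodd hgt hcop ρ' hρ' false j hj (γ' j) (hγ' j hj).1 (hγ' j hj).2
    have hvz1 : ∀ j, 1 ≤ j → BF.Vanish b (↑z1) j (γ' j) := fun j hj =>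
      BF.pairF_vanish hodd hgt hcop ρ' hρ' true j hj (γ' j) (hγ' j hj).1 (hγ' j hj).2
    have hUz0 : ∀ j, 1 ≤ j → BF.Vanish b (↑(U z0)) j (γ' j + cU j) := fun j hj =>
      BF.const_shiftU hodd hgt hcop U hcomm cU hcU j hj z0 (γ' j) (hvz0 j hj)
    have hUz1 : ∀ j, 1 ≤ j → BF.Vanish b (↑(U z1)) j (γ' j + cU j) := fun j hj =>
      BF.const_shiftU hodd hgt hcop U hcomm cU hcU j hj z1 (γ' j) (hvz1 j hj)
    have hnez : ∃ m : ℤ, (↑(U z0) : ℤ → Bool) m ≠ (↑(U z1) : ℤ → Bool) m := by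
      by_contra h
      push_neg at h
      have heq : U z0 = U z1 := Subtype.ext (funext h)
      have heq2 : z0 = z1 := (EquivLike.injective U) heq
      have hval : (↑z0 : ℤ → Bool) 0 = (↑z1 : ℤ → Bool) 0 := by rw [heq2]
      simp [hz0, hz1, BF.pairF] at hval
    obtain ⟨m', hm'⟩ := hnez
    obtain ⟨hA', hB'⟩ := BF.differ_struct hodd hgt hcop (U z0).2 (U z1).2
      (fun j => γ' j + cU j) hUz0 hUz1 m' hm'
    have hm'd : m' = d := by
      have hsub : ∀ i : ℕ, 1 ≤ i → (2:ℤ)^i ∣ m' - d := by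
        intro i hi
        have h1 := hA' i hi
        have h2 := (hγ' i hi).1
        have h3 := hd2 i hi
        have he : m' - d = ((m' - (γ' i + cU i)) + γ' i) - (d - cU i) := by ring
        rw [he]; exact dvd_sub (dvd_add h1 h2) h3
      have h0 := BF.eq_of_pow2 hsub
      omega
    apply hB' j₀ hj₀
    rw [hm'd, BF.Mi]
    refine IsCoprime.mul_dvd ((BF.cop2b hodd hgt hcop j₀ hj₀).pow_left) ?_ ?_
    · have h1 := hd2 j₀ hj₀
      have h2 := (hγ' j₀ hj₀).1
      have he : d - (γ' j₀ + cU j₀) = (d - cU j₀) - γ' j₀ := by ring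
      rw [he]; exact dvd_sub h1 h2
    · have h2 := (hγ' j₀ hj₀).2
      have hρeq : ρ' j₀ = d - cU j₀ := by simp [hρ'def]
      have he : d - (γ' j₀ + cU j₀) = -(γ' j₀ - ρ' j₀) := by rw [hρeq]; ring
      rw [he]; exact dvd_neg.2 h2
  have hMdvd : ∀ j, 1 ≤ j → BF.Mi b j ∣ d - cU j := by
    intro j hj
    rw [BF.Mi]
    exact IsCoprime.mul_dvd ((BF.cop2b hodd hgt hcop j hj).pow_left) (hd2 j hj) (hkey j hj)
  have hveta : ∀ j, 1 ≤ j → BF.Vanish b (↑(U (BF.etaPt b))) j d := by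
    intro j hj
    refine BF.vanish_congr ?_ (hcU j hj)
    have he : cU j - d = -(d - cU j) := by ring
    rw [he]; exact dvd_neg.2 (hMdvd j hj)
  set o : ↥(Xeta b) := BF.orbitPt b (-d) with ho
  have hvo : ∀ j, 1 ≤ j → BF.Vanish b (↑o) j d := by
    intro j hj
    have h := BF.vanish_orbit (b := b) j hj (-d)
    simpa [ho, BF.orbitPt] using h
  have hUeta : (↑(U (BF.etaPt b)) : ℤ → Bool) = fun m' => etaB b (m' + -d) := by
    have h4 : (↑(U (BF.etaPt b)) : ℤ → Bool) = (↑o : ℤ → Bool) := by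
      funext m
      by_contra hne
      obtain ⟨hA2, hB2⟩ := BF.differ_struct hodd hgt hcop (U (BF.etaPt b)).2 o.2
        (fun _ => d) hveta hvo m hne
      have h0 : m - d = 0 := BF.eq_of_pow2 (fun i hi => hA2 i hi)
      exact hB2 1 le_rfl (by rw [h0]; exact dvd_zero _)
    rw [h4, ho]
    rfl
  refine ⟨-d, fun y => ?_⟩
  funext m
  obtain ⟨F', hF'⟩ := BF.contU U y {m}
  obtain ⟨k, hk⟩ := BF.mem_Xeta_iff.1 y.2 (insert (m + -d) F')
  set o' : ↥(Xeta b) := BF.orbitPt b k with ho'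
  have hagree : ∀ m' ∈ F', (↑o' : ℤ → Bool) m' = (↑y : ℤ → Bool) m' := fun m' hm' =>
    (hk m' (Finset.mem_insert_of_mem hm')).symm
  have h1 : (↑(U y) : ℤ → Bool) m = (↑(U o') : ℤ → Bool) m :=
    (hF' o' hagree m (Finset.mem_singleton_self m)).symm
  have h2 : (↑(U o') : ℤ → Bool) = fun m' => (↑(U (BF.etaPt b)) : ℤ → Bool) (m' + k) :=
    BF.hcommZ U hcomm k (BF.etaPt b) o' rfl
  have h3 : (↑y : ℤ → Bool) (m + -d) = etaB b ((m + -d) + k) :=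
    hk _ (Finset.mem_insert_self _ _)
  rw [h1]
  simp only [h2, hUeta]
  rw [h3]
  congr 1
  ring
end

section
/- The sequence η is a Toeplitz sequence: for every n ∈ ℤ there is a positive integer s with n ∈ Per_s(η). -/
open scoped BigOperators

-- The indicator function of the `\mathscr{B}`-free integers for
--`\mathscr{B} = {2^i b_i : i \ge 1}`. 
open Classical in
noncomputable def eta (b : ℕ → ℕ) : ℤ → ℕ := fun n =>
  if (∀ i : ℕ, 1 ≤ i → ¬ ((2 : ℤ) ^ i * (b i : ℤ) ∣ n)) then 1 else 0

-- `Per x s` is the set of `s`-periodic positions of `x`. 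
def Per (x : ℤ → ℕ) (s : ℕ) : Set ℤ := {n : ℤ | ∀ k : ℤ, x (n + k * s) = x n}

-- `pp b t = 2^t * b_1 * b_2 * \cdots * b_t`. 
def pp (b : ℕ → ℕ) (t : ℕ) : ℕ := 2 ^ t * ∏ i ∈ Finset.Icc 1 t, b i

theorem eta_isToeplitz (b : ℕ → ℕ)
    (hodd : ∀ i : ℕ, 1 ≤ i → Odd (b i))
    (hgt : ∀ i : ℕ, 1 ≤ i → 1 < b i)
    (hcop : ∀ i j : ℕ, 1 ≤ i → 1 ≤ j → i ≠ j → Nat.Coprime (b i) (b j)) :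
    ∀ n : ℤ, ∃ s : ℕ, 0 < s ∧ n ∈ Per (eta b) s := by
  intro n
  by_cases h : ∀ i : ℕ, 1 ≤ i → ¬ ((2 : ℤ) ^ i * (b i : ℤ) ∣ n)
  · -- η(n) = 1
    have hn0 : n ≠ 0 := by
      intro h0
      exact h 1 le_rfl (by simp [h0])
    set t := n.natAbs with ht
    have ht1 : 1 ≤ t := Nat.one_le_iff_ne_zero.mpr (Int.natAbs_ne_zero.mpr hn0)
    refine ⟨pp b t, ?_, ?_⟩
    · apply Nat.mul_pos (pow_pos (by norm_num : (0:ℕ) < 2) t)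
      exact Finset.prod_pos fun i hi =>
        lt_trans Nat.zero_lt_one (hgt i (Finset.mem_Icc.mp hi).1)
    · intro k
      have key : ∀ i, 1 ≤ i → ¬ ((2 : ℤ) ^ i * (b i : ℤ) ∣ n + k * (pp b t : ℤ)) := by
        intro i hi hdvd
        by_cases hit : i ≤ t
        · -- 2^i b_i divides pp b t, hence divides n
          have h1 : (2 ^ i * b i : ℕ) ∣ pp b t := by
            have hb : b i ∣ ∏ j ∈ Finset.Icc 1 t, b j :=
              Finset.dvd_prod_of_mem b (Finset.mem_Icc.mpr ⟨hi, hit⟩)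
            have h2 : (2 : ℕ) ^ i ∣ 2 ^ t := pow_dvd_pow 2 hit
            have hnd : ¬ (2 ∣ b i) := by
              rcases hodd i hi with ⟨m, hm⟩
              omega
            have hcop2 : Nat.Coprime (2 ^ i) (b i) :=
              Nat.Coprime.pow_left i ((Nat.Prime.coprime_iff_not_dvd Nat.prime_two).mpr hnd)
            exact Nat.Coprime.mul_dvd_of_dvd_of_dvd hcop2
              (dvd_trans h2 (Dvd.intro _ rfl))
              (dvd_trans hb (Dvd.intro_left _ rfl))
          have h1' : (2 : ℤ) ^ i * (b i : ℤ) ∣ (pp b t : ℤ) := by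
            exact_mod_cast Int.natCast_dvd_natCast.mpr h1
          have hdn : (2 : ℤ) ^ i * (b i : ℤ) ∣ n := by
            have := dvd_sub hdvd (Dvd.dvd.mul_left h1' k)
            simpa using this
          exact h i hi hdn
        · push_neg at hit
          -- 2^t divides n, contradiction with 2^t > |n|
          have h2t : (2 : ℤ) ^ t ∣ n + k * (pp b t : ℤ) :=
            dvd_trans (dvd_trans (pow_dvd_pow 2 hit.le) (Dvd.intro _ rfl)) hdvd
          have h2pp : (2 : ℤ) ^ t ∣ (pp b t : ℤ) := by
            have : (2 : ℕ) ^ t ∣ pp b t := Dvd.intro _ rfl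
            exact_mod_cast Int.natCast_dvd_natCast.mpr this
          have hdn : (2 : ℤ) ^ t ∣ n := by
            have := dvd_sub h2t (Dvd.dvd.mul_left h2pp k)
            simpa using this
          have hle : (2 : ℤ) ^ t ≤ |n| :=
            Int.le_of_dvd (abs_pos.mpr hn0) ((dvd_abs _ _).mpr hdn)
          have habs : |n| = (t : ℤ) := by
            rw [Int.abs_eq_natAbs]
          rw [habs] at hle
          have : (2 : ℕ) ^ t ≤ t := by exact_mod_cast hle
          exact absurd this (not_le.mpr (Nat.lt_two_pow_self (n := t)))
      simp only [eta]
      rw [if_pos key, if_pos h]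
  · -- η(n) = 0
    push_neg at h
    obtain ⟨i, hi, hdvd⟩ := h
    refine ⟨2 ^ i * b i, ?_, ?_⟩
    · exact Nat.mul_pos (pow_pos (by norm_num : (0:ℕ) < 2) i)
        (lt_trans Nat.zero_lt_one (hgt i hi))
    · intro k
      have hcast : ((2 ^ i * b i : ℕ) : ℤ) = (2 : ℤ) ^ i * (b i : ℤ) := by push_cast; ring
      have hdvd2 : (2 : ℤ) ^ i * (b i : ℤ) ∣ n + k * ((2 ^ i * b i : ℕ) : ℤ) := by
        rw [hcast]
        exact dvd_add hdvd (Dvd.dvd.mul_left dvd_rfl k)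
      have key1 : ¬ (∀ j : ℕ, 1 ≤ j → ¬ ((2 : ℤ) ^ j * (b j : ℤ) ∣ n + k * ((2 ^ i * b i : ℕ) : ℤ))) := by
        push_neg; exact ⟨i, hi, hdvd2⟩
      have key2 : ¬ (∀ j : ℕ, 1 ≤ j → ¬ ((2 : ℤ) ^ j * (b j : ℤ) ∣ n)) := by
        push_neg; exact ⟨i, hi, hdvd⟩
      simp only [eta]
      rw [if_neg key1, if_neg key2]
end

section
/- For every t ≥ 1, the number p_t = 2^t b_1 b_2 ⋯ b_t is an essential period of η: Per_{p_t}(η) is nonempty, and for every positive integer s < p_t one has Per_s(η) ≠ Per_{p_t}(η). -/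
open scoped BigOperators

lemma eta_eq_zero (b : ℕ → ℕ) {n : ℤ} {i : ℕ} (hi : 1 ≤ i)
    (h : (2 : ℤ) ^ i * (b i : ℤ) ∣ n) : eta b n = 0 := by
  unfold eta
  rw [if_neg]
  push_neg
  exact ⟨i, hi, h⟩

lemma eta_eq_one (b : ℕ → ℕ) {n : ℤ}
    (h : ∀ i : ℕ, 1 ≤ i → ¬ ((2 : ℤ) ^ i * (b i : ℤ) ∣ n)) : eta b n = 1 := by
  unfold eta
  rw [if_pos h]

lemma odd_int_dvd {v m : ℕ} (hv : Odd v) {U : ℤ} (h : (v : ℤ) ∣ 2 ^ m * U) :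
    (v : ℤ) ∣ U := by
  have hco : Nat.Coprime v (2 ^ m) :=
    ((Nat.coprime_two_left.mpr hv).symm).pow_right m
  have hico : IsCoprime (v : ℤ) ((2 : ℤ) ^ m) := by
    have := Nat.isCoprime_iff_coprime.mpr hco
    push_cast at this
    exact this
  exact hico.dvd_of_dvd_mul_left h

lemma key_not_dvd (b : ℕ → ℕ) (hodd : ∀ i : ℕ, 1 ≤ i → Odd (b i)) (m : ℕ) (U : ℤ)
    (hU : ¬ (2 : ℤ) ∣ U) (hb : ∀ i : ℕ, 1 ≤ i → i ≤ m → ¬ (b i : ℤ) ∣ U) :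
    ∀ i : ℕ, 1 ≤ i → ¬ ((2 : ℤ) ^ i * (b i : ℤ) ∣ 2 ^ m * U) := by
  intro i hi hdvd
  rcases le_or_gt i m with him | him
  · have h1 : (b i : ℤ) ∣ 2 ^ m * U := (dvd_mul_left _ _).trans hdvd
    exact hb i hi him (odd_int_dvd (hodd i hi) h1)
  · have h2 : (2 : ℤ) ^ (m + 1) ∣ 2 ^ m * U :=
      ((pow_dvd_pow 2 him).trans (dvd_mul_right _ _)).trans hdvd
    rw [pow_succ] at h2
    exact hU ((mul_dvd_mul_iff_left (a := (2 : ℤ) ^ m) (by positivity)).mp h2)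

theorem pp_essential_period (b : ℕ → ℕ)
    (hodd : ∀ i : ℕ, 1 ≤ i → Odd (b i))
    (hgt : ∀ i : ℕ, 1 ≤ i → 1 < b i)
    (hcop : ∀ i j : ℕ, 1 ≤ i → 1 ≤ j → i ≠ j → Nat.Coprime (b i) (b j))
    (t : ℕ) (ht : 1 ≤ t) :
    (Per (eta b) (pp b t)).Nonempty ∧
      ∀ s : ℕ, 0 < s → s < pp b t → Per (eta b) s ≠ Per (eta b) (pp b t) := by
  have hppdvd : ∀ J : ℕ, 1 ≤ J → J ≤ t → ((2 : ℤ) ^ J * (b J : ℤ)) ∣ (pp b t : ℤ) := by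
    intro J h1 h2
    have hnat : 2 ^ J * b J ∣ pp b t := by
      unfold pp
      exact mul_dvd_mul (pow_dvd_pow 2 h2)
        (Finset.dvd_prod_of_mem b (by simp [Finset.mem_Icc, h1, h2]))
    exact_mod_cast hnat
  constructor
  · refine ⟨0, fun k => ?_⟩
    have hd : (2 : ℤ) ^ 1 * (b 1 : ℤ) ∣ 0 + k * (pp b t : ℤ) := by
      rw [zero_add]
      exact (hppdvd 1 le_rfl ht).mul_left k
    rw [eta_eq_zero b le_rfl hd, eta_eq_zero b le_rfl (dvd_zero _)]
  · intro s hs hslt heq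
    have hs0 : s ≠ 0 := hs.ne'
    set a := s.factorization 2 with ha
    set c := s / 2 ^ a with hcdef
    have hsc : 2 ^ a * c = s := Nat.ordProj_mul_ordCompl_eq_self s 2
    have hcodd : ¬ 2 ∣ c := Nat.not_dvd_ordCompl Nat.prime_two hs0
    have hc0 : 0 < c := by
      rcases Nat.eq_zero_or_pos c with h | h
      · exfalso; apply hs0; rw [← hsc, h, mul_zero]
      · exact h
    have hscast : (s : ℤ) = 2 ^ a * (c : ℤ) := by
      rw [← hsc]; push_cast; ring
    -- produce J and k0
    obtain ⟨J, hJ1, hJt, k0, hone⟩ :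
        ∃ J : ℕ, 1 ≤ J ∧ J ≤ t ∧ ∃ k0 : ℤ,
          ∀ i : ℕ, 1 ≤ i → ¬ ((2 : ℤ) ^ i * (b i : ℤ) ∣
            2 ^ J * (b J : ℤ) + k0 * s) := by
      rcases le_or_gt t a with hta | hat
      · -- Case A : 2^t ∣ s
        have hexJ : ∃ j : ℕ, 1 ≤ j ∧ j ≤ t ∧ ¬ b j ∣ c := by
          by_contra hcon
          push_neg at hcon
          have hdvdZ : (∏ i ∈ Finset.Icc 1 t, (b i : ℤ)) ∣ (c : ℤ) := by
            apply Finset.prod_dvd_of_coprime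
            · intro i hi j hj hij
              simp only [Finset.coe_Icc, Set.mem_Icc] at hi hj
              exact Nat.isCoprime_iff_coprime.mpr (hcop i j hi.1 hj.1 hij)
            · intro i hi
              simp only [Finset.mem_Icc] at hi
              exact_mod_cast hcon i hi.1 hi.2
          have hdvdN : (∏ i ∈ Finset.Icc 1 t, b i) ∣ c := by
            have : ((∏ i ∈ Finset.Icc 1 t, b i : ℕ) : ℤ) ∣ (c : ℤ) := by
              push_cast; exact hdvdZ
            exact_mod_cast this
          have hle : (∏ i ∈ Finset.Icc 1 t, b i) ≤ c := Nat.le_of_dvd hc0 hdvdN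
          have : pp b t ≤ s := by
            rw [← hsc]
            unfold pp
            exact Nat.mul_le_mul (Nat.pow_le_pow_right (by norm_num) hta) hle
          omega
        obtain ⟨J, hJ1, hJt, hJc⟩ := hexJ
        have hJa : J ≤ a := hJt.trans hta
        set Rn : ℕ := ∏ i ∈ (Finset.Icc 1 t).erase J, b i with hRn
        set R : ℤ := (Rn : ℤ) with hR
        set U : ℤ := (b J : ℤ) + 2 ^ (a - J + 1) * R * (c : ℤ) with hU
        have key2 : (2 : ℤ) ^ J * 2 ^ (a - J) = 2 ^ a := by
          rw [← pow_add, show J + (a - J) = a from by omega]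
        have hNU : (2 : ℤ) ^ J * (b J : ℤ) + (2 * R) * (s : ℤ) = 2 ^ J * U := by
          rw [hscast, hU]
          have e1 : (2 : ℤ) ^ (a - J + 1) = 2 ^ (a - J) * 2 := pow_succ 2 (a - J)
          rw [e1]
          linear_combination (-2 : ℤ) * R * (c : ℤ) * key2
        have hUodd : ¬ (2 : ℤ) ∣ U := by
          intro h2U
          have ht2 : (2 : ℤ) ∣ 2 ^ (a - J + 1) * R * (c : ℤ) :=
            Dvd.dvd.mul_right (Dvd.dvd.mul_right (dvd_pow_self 2 (by omega)) R) (c : ℤ)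
          have hbJ : (2 : ℤ) ∣ (b J : ℤ) := by
            have h3 := dvd_sub h2U ht2
            rwa [show U - 2 ^ (a - J + 1) * R * (c : ℤ) = (b J : ℤ) from by
              rw [hU]; ring] at h3
          have : (2 : ℕ) ∣ b J := by exact_mod_cast hbJ
          exact absurd ((Nat.coprime_two_left.mpr (hodd J hJ1)).eq_one_of_dvd this)
            (by norm_num)
        have hbU : ∀ i : ℕ, 1 ≤ i → i ≤ J → ¬ (b i : ℤ) ∣ U := by
          intro i hi1 hiJ hdvd
          by_cases hij : i = J
          · subst hij
            have h1 : (b i : ℤ) ∣ 2 ^ (a - i + 1) * R * (c : ℤ) := by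
              have := dvd_sub hdvd (dvd_refl (b i : ℤ))
              rwa [show U - (b i : ℤ) = 2 ^ (a - i + 1) * R * (c : ℤ) from by
                rw [hU]; ring] at this
            have h2 : (b i : ℤ) ∣ R * (c : ℤ) := by
              apply odd_int_dvd (hodd i hi1)
              rwa [show (2 : ℤ) ^ (a - i + 1) * R * (c : ℤ)
                = 2 ^ (a - i + 1) * (R * (c : ℤ)) from by ring] at h1
            have h3 : b i ∣ Rn * c := by
              have h2' : (b i : ℤ) ∣ (Rn : ℤ) * (c : ℤ) := by rw [← hR]; exact h2
              exact_mod_cast h2'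
            have hcoR : Nat.Coprime (b i) Rn := by
              apply Nat.Coprime.prod_right
              intro j hj
              have hjne : j ≠ i := Finset.ne_of_mem_erase hj
              have hj1 : 1 ≤ j := (Finset.mem_Icc.mp (Finset.mem_of_mem_erase hj)).1
              exact hcop i j hi1 hj1 (Ne.symm hjne)
            exact hJc (hcoR.dvd_of_dvd_mul_left h3)
          · have hiR : (b i : ℤ) ∣ R := by
              have hN : b i ∣ Rn :=
                Finset.dvd_prod_of_mem b
                  (Finset.mem_erase.mpr ⟨hij, Finset.mem_Icc.mpr ⟨hi1, hiJ.trans hJt⟩⟩)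
              rw [hR]
              exact_mod_cast hN
            have hbJ : (b i : ℤ) ∣ (b J : ℤ) := by
              have ht2 : (b i : ℤ) ∣ 2 ^ (a - J + 1) * R * (c : ℤ) :=
                Dvd.dvd.mul_right (Dvd.dvd.mul_left hiR _) _
              have h3 := dvd_sub hdvd ht2
              rwa [show U - 2 ^ (a - J + 1) * R * (c : ℤ) = (b J : ℤ) from by
                rw [hU]; ring] at h3
            have hN : b i ∣ b J := by exact_mod_cast hbJ
            exact absurd ((hcop i J hi1 hJ1 hij).eq_one_of_dvd hN)
              (by have := hgt i hi1; omega)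
        refine ⟨J, hJ1, hJt, 2 * R, ?_⟩
        intro i hi
        rw [show (2 : ℤ) ^ J * (b J : ℤ) + 2 * R * (s : ℤ) = 2 ^ J * U from hNU]
        exact key_not_dvd b hodd J U hUodd hbU i hi
      · -- Case B : 2-adic valuation of s is < t
        set Qn : ℕ := ∏ i ∈ Finset.Icc 1 a, b i with hQn
        set Q : ℤ := (Qn : ℤ) with hQ
        set U : ℤ := 2 ^ (t - a) * (b t : ℤ) + Q * (c : ℤ) with hU
        have key2 : (2 : ℤ) ^ a * 2 ^ (t - a) = 2 ^ t := by
          rw [← pow_add, show a + (t - a) = t from by omega]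
        have hNU : (2 : ℤ) ^ t * (b t : ℤ) + Q * (s : ℤ) = 2 ^ a * U := by
          rw [hscast, hU]
          linear_combination -(b t : ℤ) * key2
        have hcoQ : Nat.Coprime 2 Qn := by
          apply Nat.Coprime.prod_right
          intro j hj
          exact Nat.coprime_two_left.mpr (hodd j (Finset.mem_Icc.mp hj).1)
        have hcoc : Nat.Coprime 2 c :=
          Nat.coprime_two_left.mpr (Nat.odd_iff.mpr (by omega))
        have hUodd : ¬ (2 : ℤ) ∣ U := by
          intro h2U
          have ht2 : (2 : ℤ) ∣ 2 ^ (t - a) * (b t : ℤ) :=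
            Dvd.dvd.mul_right (dvd_pow_self 2 (by omega)) _
          have hQc : (2 : ℤ) ∣ Q * (c : ℤ) := by
            have h3 := dvd_sub h2U ht2
            rwa [show U - 2 ^ (t - a) * (b t : ℤ) = Q * (c : ℤ) from by
              rw [hU]; ring] at h3
          have hN : (2 : ℕ) ∣ Qn * c := by
            have hQc' : (2 : ℤ) ∣ (Qn : ℤ) * (c : ℤ) := by rw [← hQ]; exact hQc
            exact_mod_cast hQc'
          exact absurd ((hcoQ.mul_right hcoc).eq_one_of_dvd hN) (by norm_num)
        have hbU : ∀ i : ℕ, 1 ≤ i → i ≤ a → ¬ (b i : ℤ) ∣ U := by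
          intro i hi1 hia hdvd
          have hiQ : (b i : ℤ) ∣ Q := by
            have hN : b i ∣ Qn :=
              Finset.dvd_prod_of_mem b (Finset.mem_Icc.mpr ⟨hi1, hia⟩)
            rw [hQ]
            exact_mod_cast hN
          have hbt : (b i : ℤ) ∣ 2 ^ (t - a) * (b t : ℤ) := by
            have ht2 : (b i : ℤ) ∣ Q * (c : ℤ) := Dvd.dvd.mul_right hiQ _
            have h3 := dvd_sub hdvd ht2
            rwa [show U - Q * (c : ℤ) = 2 ^ (t - a) * (b t : ℤ) from by
              rw [hU]; ring] at h3
          have h2 : (b i : ℤ) ∣ (b t : ℤ) := odd_int_dvd (hodd i hi1) hbt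
          have hN : b i ∣ b t := by exact_mod_cast h2
          have hit : i ≠ t := by omega
          exact absurd ((hcop i t hi1 ht hit).eq_one_of_dvd hN)
            (by have := hgt i hi1; omega)
        refine ⟨t, ht, le_rfl, Q, ?_⟩
        intro i hi
        rw [show (2 : ℤ) ^ t * (b t : ℤ) + Q * (s : ℤ) = 2 ^ a * U from hNU]
        exact key_not_dvd b hodd a U hUodd hbU i hi
    -- now derive the contradiction
    set n : ℤ := 2 ^ J * (b J : ℤ) with hn
    have hmem : n ∈ Per (eta b) (pp b t) := by
      intro k
      have hdd : (2 : ℤ) ^ J * (b J : ℤ) ∣ n + k * (pp b t : ℤ) :=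
        dvd_add dvd_rfl ((hppdvd J hJ1 hJt).mul_left k)
      rw [eta_eq_zero b hJ1 hdd, eta_eq_zero b hJ1 dvd_rfl]
    rw [← heq] at hmem
    have hcontra := hmem k0
    rw [eta_eq_one b hone, eta_eq_zero b hJ1 dvd_rfl] at hcontra
    exact one_ne_zero hcontra
end

section
/- The sequence (p_t)_{t≥1} with p_t = 2^t b_1 b_2 ⋯ b_t is a periodic structure of η: for every t ≥ 1 one has p_t | p_{t+1}, and ⋃_{t≥1} Per_{p_t}(η) = ℤ. -/
open scoped BigOperators

lemma key_dvd (b : ℕ → ℕ) {i t : ℕ} (h1 : 1 ≤ i) (h2 : i ≤ t) :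
    (2 : ℤ) ^ i * (b i : ℤ) ∣ (pp b t : ℤ) := by
  have : 2 ^ i * b i ∣ pp b t := by
    exact mul_dvd_mul (pow_dvd_pow 2 h2)
      (Finset.dvd_prod_of_mem b (Finset.mem_Icc.mpr ⟨h1, h2⟩))
  have := Int.natCast_dvd_natCast.mpr this
  simpa using this

lemma pow_dvd_pp (b : ℕ → ℕ) (t : ℕ) : (2 : ℤ) ^ t ∣ (pp b t : ℤ) := by
  have : 2 ^ t ∣ pp b t := dvd_mul_right _ _
  have := Int.natCast_dvd_natCast.mpr this
  simpa using this

theorem pp_periodic_structure (b : ℕ → ℕ)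
    (hodd : ∀ i : ℕ, 1 ≤ i → Odd (b i))
    (hgt : ∀ i : ℕ, 1 ≤ i → 1 < b i)
    (hcop : ∀ i j : ℕ, 1 ≤ i → 1 ≤ j → i ≠ j → Nat.Coprime (b i) (b j)) :
    (∀ t : ℕ, 1 ≤ t → pp b t ∣ pp b (t + 1)) ∧
      (⋃ t : ℕ, ⋃ _ : 1 ≤ t, Per (eta b) (pp b t)) = (Set.univ : Set ℤ) := by
  constructor
  · intro t _
    exact ⟨2 * b (t + 1), by
      rw [pp, pp, Finset.prod_Icc_succ_top (by omega : 1 ≤ t + 1)]; ring⟩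
  · ext n
    simp only [Set.mem_iUnion, Set.mem_univ, iff_true]
    by_cases hC : ∀ i : ℕ, 1 ≤ i → ¬ ((2 : ℤ) ^ i * (b i : ℤ) ∣ n)
    · -- eta n = 1
      have hn0 : n ≠ 0 := by
        intro h
        exact hC 1 le_rfl (h ▸ dvd_zero _)
      set a := n.natAbs.factorization 2 with ha
      have hnd : ¬ (2 : ℤ) ^ (a + 1) ∣ n := by
        intro h
        have h1 : (2 : ℕ) ^ (a + 1) ∣ n.natAbs := by
          have h2 := Int.natAbs_dvd_natAbs.mpr h
          simpa only [Int.natAbs_pow, Int.natAbs_natCast, Int.reduceAbs] using h2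
        exact Nat.pow_succ_factorization_not_dvd
          (Int.natAbs_ne_zero.mpr hn0) Nat.prime_two h1
      refine ⟨a + 1, by omega, ?_⟩
      intro k
      have hetan : eta b n = 1 := by rw [eta]; exact if_pos hC
      rw [hetan]
      have hC' : ∀ i : ℕ, 1 ≤ i → ¬ ((2 : ℤ) ^ i * (b i : ℤ) ∣ n + k * (pp b (a + 1) : ℤ)) := by
        intro i hi hdvd
        by_cases hle : i ≤ a + 1
        · have hpp : (2 : ℤ) ^ i * (b i : ℤ) ∣ k * (pp b (a + 1) : ℤ) :=
            Dvd.dvd.mul_left (key_dvd b hi hle) k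
          have : (2 : ℤ) ^ i * (b i : ℤ) ∣ n := by
            have := dvd_sub hdvd hpp
            simpa using this
          exact hC i hi this
        · have h2i : (2 : ℤ) ^ (a + 1) ∣ (2 : ℤ) ^ i * (b i : ℤ) :=
            dvd_mul_of_dvd_left (pow_dvd_pow 2 (by omega)) _
          have hpp : (2 : ℤ) ^ (a + 1) ∣ k * (pp b (a + 1) : ℤ) :=
            Dvd.dvd.mul_left (pow_dvd_pp b (a + 1)) k
          have : (2 : ℤ) ^ (a + 1) ∣ n := by
            have := dvd_sub (h2i.trans hdvd) hpp
            simpa using this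
          exact hnd this
      rw [eta]; exact if_pos hC'
    · -- eta n = 0
      push_neg at hC
      obtain ⟨i, hi, hdvd⟩ := hC
      refine ⟨i, hi, ?_⟩
      intro k
      have h0 : eta b n = 0 := by
        simp only [eta, ite_eq_right_iff]
        intro h
        exact absurd (h i hi) (not_not.mpr hdvd)
      rw [h0]
      have hdvd' : (2 : ℤ) ^ i * (b i : ℤ) ∣ n + k * (pp b i : ℤ) :=
        dvd_add hdvd (Dvd.dvd.mul_left (key_dvd b hi le_rfl) k)
      simp only [eta, ite_eq_right_iff]
      intro h
      exact absurd (h i hi) (not_not.mpr hdvd')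
end

section
/- The sequence η is not periodic: there is no positive integer s such that η(n + s) = η(n) for all n ∈ ℤ. -/
open scoped BigOperators

theorem eta_not_periodic (b : ℕ → ℕ)
    (hodd : ∀ i : ℕ, 1 ≤ i → Odd (b i))
    (hgt : ∀ i : ℕ, 1 ≤ i → 1 < b i)
    (hcop : ∀ i j : ℕ, 1 ≤ i → 1 ≤ j → i ≠ j → Nat.Coprime (b i) (b j)) :
    ¬ ∃ s : ℕ, 0 < s ∧ ∀ n : ℤ, eta b (n + s) = eta b n := by
  rintro ⟨s, hs, hper⟩
  -- extend periodicity to natural multiples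
  have hper' : ∀ (k : ℕ) (n : ℤ), eta b (n + (k : ℤ) * s) = eta b n := by
    intro k
    induction k with
    | zero => intro n; simp
    | succ k ih =>
      intro n
      have : (n : ℤ) + ((k + 1 : ℕ) : ℤ) * s = (n + (k : ℤ) * s) + s := by push_cast; ring
      rw [this, hper, ih]
  -- write s = 2^a * c with c odd
  obtain ⟨a, c, hc2, hsc⟩ := Nat.exists_eq_pow_mul_and_not_dvd hs.ne' 2 (by norm_num)
  set B : ℕ := ∏ i ∈ Finset.Icc 1 a, b i with hB
  have hB2 : ¬ 2 ∣ B := by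
    intro h
    obtain ⟨i, hi, hdvd⟩ := (Nat.Prime.prime Nat.prime_two).dvd_finset_prod_iff _ |>.mp h
    exact (Nat.not_even_iff_odd.mpr (hodd i (Finset.mem_Icc.mp hi).1)) (even_iff_two_dvd.mpr hdvd)
  -- the witness
  set m : ℕ := 2 * b (a + 1) + B * c with hm
  have hm2 : ¬ 2 ∣ m := by
    intro h
    have : 2 ∣ B * c := (Nat.dvd_add_right ⟨b (a+1), rfl⟩).mp h
    rcases (Nat.prime_two.dvd_mul).mp this with h' | h'
    · exact hB2 h'
    · exact hc2 h'
  set N : ℕ := 2 ^ (a + 1) * b (a + 1) + B * s with hN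
  have hNm : N = 2 ^ a * m := by
    rw [hN, hm, hsc]; ring
  -- η(N) = 1
  have hN1 : eta b (N : ℤ) = 1 := by
    rw [eta, if_pos]
    intro i hi hdvd
    have hdvdN : 2 ^ i * b i ∣ N := by
      have : ((2 ^ i * b i : ℕ) : ℤ) ∣ (N : ℤ) := by push_cast; exact hdvd
      exact_mod_cast this
    rw [hNm] at hdvdN
    rcases le_or_gt i a with hia | hia
    · -- b i ∣ 2^a * m, b i odd ⇒ b i ∣ m
      have hbid : b i ∣ 2 ^ a * m := (dvd_mul_left (b i) (2 ^ i)).trans hdvdN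
      have hcop2 : Nat.Coprime (b i) 2 := Nat.coprime_two_right.mpr (hodd i hi)
      have hbm : b i ∣ m := (hcop2.pow_right a).dvd_of_dvd_mul_left hbid
      have hbB : b i ∣ B := Finset.dvd_prod_of_mem b (Finset.mem_Icc.mpr ⟨hi, hia⟩)
      have hb2b : b i ∣ 2 * b (a + 1) := by
        have h' := Nat.dvd_sub hbm (hbB.mul_right c)
        simpa [hm] using h'
      have hbb : b i ∣ b (a + 1) := hcop2.dvd_of_dvd_mul_left hb2b
      have hco : Nat.Coprime (b i) (b (a + 1)) := hcop i (a + 1) hi (by omega) (by omega)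
      have : b i = 1 := Nat.eq_one_of_dvd_coprimes hco dvd_rfl hbb
      have := hgt i hi
      omega
    · -- 2^(a+1) ∣ 2^a * m ⇒ 2 ∣ m
      have h2 : 2 ^ (a + 1) ∣ 2 ^ a * m := by
        refine dvd_trans ?_ (dvd_trans (Dvd.intro (b i) rfl) hdvdN)
        exact pow_dvd_pow 2 hia
      rw [pow_succ] at h2
      exact hm2 ((Nat.mul_dvd_mul_iff_left (by positivity : 0 < 2 ^ a)).mp h2)
  -- η(2^(a+1) * b(a+1)) = 0
  have hN0 : eta b ((2 ^ (a + 1) * b (a + 1) : ℕ) : ℤ) = 0 := by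
    rw [eta, if_neg]
    push_neg
    exact ⟨a + 1, by omega, by push_cast; exact dvd_rfl⟩
  have := hper' B ((2 ^ (a + 1) * b (a + 1) : ℕ) : ℤ)
  rw [hN0] at this
  have harg : ((2 ^ (a + 1) * b (a + 1) : ℕ) : ℤ) + (B : ℤ) * s = (N : ℤ) := by
    rw [hN]; push_cast; ring
  rw [harg, hN1] at this
  exact one_ne_zero this
end

section
/- For every t ≥ 1, the number of holes at level t equals ∏_{i=1}^t (b_i − 1), i.e. the cardinality of {s ∈ ℤ : 0 ≤ s < p_t and s ∉ Per_{p_t}(η)} is ∏_{i=1}^t (b_i − 1). -/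
open scoped BigOperators

section Aux

/-- `eta` takes equal values at points where the defining condition is equivalent. -/
lemma eta_congr (b : ℕ → ℕ) (n m : ℤ)
    (h : (∀ i : ℕ, 1 ≤ i → ¬ ((2 : ℤ) ^ i * (b i : ℤ) ∣ n)) ↔
         (∀ i : ℕ, 1 ≤ i → ¬ ((2 : ℤ) ^ i * (b i : ℤ) ∣ m))) :
    eta b n = eta b m := by
  classical
  unfold eta
  exact if_congr h rfl rfl

/-- Characterization of the holes at level `t`. -/
lemma not_per_iff (b : ℕ → ℕ)
    (hodd : ∀ i : ℕ, 1 ≤ i → Odd (b i))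
    (hcop : ∀ i j : ℕ, 1 ≤ i → 1 ≤ j → i ≠ j → Nat.Coprime (b i) (b j))
    (t : ℕ) (s : ℤ) :
    s ∉ Per (eta b) (pp b t) ↔
      ((2 : ℤ) ^ t ∣ s ∧ ∀ i ∈ Finset.Icc 1 t, ¬ ((2 : ℤ) ^ i * (b i : ℤ) ∣ s)) := by
  classical
  set Nz : ℤ := ∏ i ∈ Finset.Icc 1 t, ((b i : ℤ)) with hNz
  have hp : ((pp b t : ℕ) : ℤ) = 2 ^ t * Nz := by
    rw [hNz, pp]; push_cast; ring
  have hNodd : Odd Nz := by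
    rw [hNz]
    refine Finset.prod_induction _ Odd (fun x y hx hy => hx.mul hy) odd_one ?_
    intro i hi
    exact_mod_cast hodd i (Finset.mem_Icc.mp hi).1
  have hF1 : ∀ i ∈ Finset.Icc 1 t, (2 : ℤ) ^ i * (b i : ℤ) ∣ ((pp b t : ℕ) : ℤ) := by
    intro i hi
    rw [hp]
    obtain ⟨hi1, hi2⟩ := Finset.mem_Icc.mp hi
    exact mul_dvd_mul (pow_dvd_pow 2 hi2)
      (Finset.dvd_prod_of_mem (fun j => ((b j : ℤ))) hi)
  have hF2 : (2 : ℤ) ^ t ∣ ((pp b t : ℕ) : ℤ) := by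
    rw [hp]; exact Dvd.intro Nz rfl
  constructor
  · -- not periodic → (2^t ∣ s ∧ holes condition)
    intro hnp
    by_contra hcon
    apply hnp
    rw [not_and_or] at hcon
    push_neg at hcon
    intro k
    rcases hcon with h2 | hex
    · -- ¬ 2^t ∣ s : show eta equal
      apply eta_congr
      constructor
      · -- Q (s + k p) → Q s
        intro hQ i hi hdvd
        rcases le_or_gt i t with hle | hlt
        · exact hQ i hi (dvd_add hdvd
            (Dvd.dvd.mul_left (hF1 i (Finset.mem_Icc.mpr ⟨hi, hle⟩)) k))
        · exact h2 ((dvd_mul_of_dvd_left (pow_dvd_pow 2 hlt.le) (b i : ℤ)).trans hdvd)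
      · -- Q s → Q (s + k p)
        intro hQ i hi hdvd
        rcases le_or_gt i t with hle | hlt
        · refine hQ i hi ?_
          have h1 : (2 : ℤ) ^ i * (b i : ℤ) ∣ k * ((pp b t : ℕ) : ℤ) :=
            Dvd.dvd.mul_left (hF1 i (Finset.mem_Icc.mpr ⟨hi, hle⟩)) k
          have := dvd_sub hdvd h1
          simpa using this
        · refine h2 ?_
          have h2i : (2 : ℤ) ^ t ∣ (2 : ℤ) ^ i * (b i : ℤ) :=
            dvd_mul_of_dvd_left (pow_dvd_pow 2 hlt.le) _
          have hks : (2 : ℤ) ^ t ∣ s + k * ((pp b t : ℕ) : ℤ) := h2i.trans hdvd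
          have hkp : (2 : ℤ) ^ t ∣ k * ((pp b t : ℕ) : ℤ) := Dvd.dvd.mul_left hF2 k
          have := dvd_sub hks hkp
          simpa using this
    · -- some i in [1,t] divides s : eta is 0 on the whole class
      obtain ⟨i, hi, hdvd⟩ := hex
      apply eta_congr
      have hi1 := (Finset.mem_Icc.mp hi).1
      constructor
      · intro hQ
        exfalso
        exact hQ i hi1 (dvd_add hdvd (Dvd.dvd.mul_left (hF1 i hi) k))
      · intro hQ; exact absurd hdvd (hQ i hi1)
  · -- (2^t ∣ s ∧ holes condition) → not periodic
    rintro ⟨⟨s', hs'⟩, hA⟩ hper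
    by_cases hQ : ∀ i : ℕ, 1 ≤ i → ¬ ((2 : ℤ) ^ i * (b i : ℤ) ∣ s)
    · -- eta s = 1; find k with eta (s + k p) = 0
      have hc2 : IsCoprime Nz 2 := by
        obtain ⟨w, hw⟩ := hNodd
        exact ⟨1, -w, by rw [hw]; ring⟩
      have hcb : IsCoprime Nz ((b (t+1) : ℤ)) := by
        rw [hNz]
        refine IsCoprime.prod_left ?_
        intro i hi
        rw [Nat.isCoprime_iff_coprime]
        exact hcop i (t+1) (Finset.mem_Icc.mp hi).1 (by omega)
          (by have := (Finset.mem_Icc.mp hi).2; omega)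
      have hcopN : IsCoprime Nz (2 * (b (t+1) : ℤ)) := IsCoprime.mul_right hc2 hcb
      obtain ⟨u, v, huv⟩ := hcopN
      set k : ℤ := -(s' * u) with hk
      have hdvd : (2 : ℤ) ^ (t+1) * (b (t+1) : ℤ) ∣ s + k * ((pp b t : ℕ) : ℤ) := by
        refine ⟨s' * v, ?_⟩
        rw [hs', hp, hk]
        linear_combination (-(2 ^ t * s')) * huv
      have h0 : eta b (s + k * ((pp b t : ℕ) : ℤ)) = 0 := by
        unfold eta
        rw [if_neg]
        push_neg
        exact ⟨t+1, by omega, hdvd⟩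
      have h1 : eta b s = 1 := by unfold eta; rw [if_pos hQ]
      have := hper k
      rw [h0, h1] at this
      exact absurd this (by norm_num)
    · -- eta s = 0; find k with eta (s + k p) = 1
      set k : ℤ := s' + 1 with hk
      have hc : s + k * ((pp b t : ℕ) : ℤ) = 2 ^ t * (s' + (s' + 1) * Nz) := by
        rw [hs', hp, hk]; ring
      have hcodd : Odd (s' + (s' + 1) * Nz) := by
        obtain ⟨w, hw⟩ := hNodd
        exact ⟨s' + w * s' + w, by rw [hw]; ring⟩
      have h1 : eta b (s + k * ((pp b t : ℕ) : ℤ)) = 1 := by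
        unfold eta
        rw [if_pos]
        intro i hi hdvd
        rcases le_or_gt i t with hle | hlt
        · refine hA i (Finset.mem_Icc.mpr ⟨hi, hle⟩) ?_
          have h1 : (2 : ℤ) ^ i * (b i : ℤ) ∣ k * ((pp b t : ℕ) : ℤ) :=
            Dvd.dvd.mul_left (hF1 i (Finset.mem_Icc.mpr ⟨hi, hle⟩)) k
          have := dvd_sub hdvd h1
          simpa using this
        · have h2i : (2 : ℤ) ^ (t+1) ∣ (2 : ℤ) ^ i * (b i : ℤ) :=
            dvd_mul_of_dvd_left (pow_dvd_pow 2 hlt) _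
          have hdd : (2 : ℤ) ^ (t+1) ∣ 2 ^ t * (s' + (s' + 1) * Nz) := by
            rw [← hc]; exact h2i.trans hdvd
          rw [pow_succ] at hdd
          obtain ⟨c, hcc⟩ := hdd
          have h2t : (2 : ℤ) ^ t ≠ 0 := by positivity
          have hcc2 : (s' + (s' + 1) * Nz) = 2 * c :=
            mul_left_cancel₀ h2t (by rw [hcc]; ring)
          obtain ⟨w2, hw2⟩ := hcodd
          rw [hcc2] at hw2
          omega
      have h0 : eta b s = 0 := by unfold eta; rw [if_neg hQ]
      have := hper k
      rw [h0, h1] at this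
      exact absurd this (by norm_num)

lemma card_ne_zero_subtype (n : ℕ) [NeZero n] :
    Fintype.card {z : ZMod n // z ≠ 0} = n - 1 := by
  classical
  have := Fintype.card_subtype_compl (fun z : ZMod n => z = 0)
  simp only [Fintype.card_subtype_eq, ZMod.card] at this
  exact this

-- Counting integers in `[0, ∏ b_i)` avoiding all residues `0 mod b_i`, via CRT.
open Classical in
lemma count_nondiv (b : ℕ → ℕ) (t : ℕ)
    (hgt : ∀ i : ℕ, 1 ≤ i → 1 < b i)
    (hcop : ∀ i j : ℕ, 1 ≤ i → 1 ≤ j → i ≠ j → Nat.Coprime (b i) (b j)) :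
    ((Finset.range (∏ i ∈ Finset.Icc 1 t, b i)).filter
      (fun m => ∀ i ∈ Finset.Icc 1 t, ¬ b i ∣ m)).card
      = ∏ i ∈ Finset.Icc 1 t, (b i - 1) := by
  classical
  set ι := {i // i ∈ Finset.Icc 1 t}
  set a : ι → ℕ := fun i => b i.1 with ha
  have hmem : ∀ i : ι, 1 ≤ (i : ℕ) := fun i => (Finset.mem_Icc.mp i.2).1
  have hpos : ∀ i : ι, 1 < a i := fun i => hgt _ (hmem i)
  haveI : ∀ i : ι, NeZero (a i) := fun i => ⟨by have := hpos i; omega⟩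
  have hpair : Pairwise (Function.onFun Nat.Coprime a) := by
    intro i j hij
    exact hcop _ _ (hmem i) (hmem j) (fun h => hij (Subtype.ext h))
  have hprodN : ∏ i : ι, a i = ∏ i ∈ Finset.Icc 1 t, b i :=
    Finset.prod_coe_sort (Finset.Icc 1 t) b
  have hprodC : ∏ i : ι, (a i - 1) = ∏ i ∈ Finset.Icc 1 t, (b i - 1) :=
    Finset.prod_coe_sort (Finset.Icc 1 t) (fun i => b i - 1)
  rw [← hprodN, ← hprodC]
  set N := ∏ i : ι, a i with hN
  haveI : NeZero N :=
    ⟨Finset.prod_ne_zero_iff.mpr (fun i _ => by have := hpos i; omega)⟩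
  set e := ZMod.prodEquivPi a hpair with he
  have hnat : ∀ (m : ℕ) (i : ι), e (m : ZMod N) i = (m : ZMod (a i)) := by
    intro m i
    rw [map_natCast]
    rfl
  have key : ((Finset.range N).filter (fun m => ∀ i ∈ Finset.Icc 1 t, ¬ b i ∣ m)).card
      = (Finset.univ.filter (fun x : ZMod N => ∀ i : ι, e x i ≠ 0)).card := by
    refine Finset.card_nbij' (fun m => (m : ZMod N)) (fun x => (x : ZMod N).val) ?_ ?_ ?_ ?_
    · intro m hm
      simp only [Finset.mem_coe, Finset.mem_filter, Finset.mem_range] at hm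
      simp only [Finset.mem_coe, Finset.mem_filter, Finset.mem_univ, true_and]
      intro i
      rw [hnat]
      rw [Ne, ZMod.natCast_eq_zero_iff]
      exact hm.2 i.1 i.2
    · intro x hx
      simp only [Finset.mem_coe, Finset.mem_filter, Finset.mem_univ, true_and] at hx
      simp only [Finset.mem_coe, Finset.mem_filter, Finset.mem_range]
      refine ⟨ZMod.val_lt x, ?_⟩
      intro i hi
      have := hx ⟨i, hi⟩
      rw [← ZMod.natCast_eq_zero_iff (x.val) (a ⟨i, hi⟩), ← Ne]
      have hv : ((x.val : ZMod N)) = x := ZMod.natCast_zmod_val x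
      rw [← hv, hnat] at this
      exact this
    · intro m hm
      simp only [Finset.mem_coe, Finset.mem_filter, Finset.mem_range] at hm
      exact ZMod.val_cast_of_lt hm.1
    · intro x hx
      exact ZMod.natCast_zmod_val x
  rw [key]
  rw [← Fintype.card_subtype]
  have e1 : {x : ZMod N // ∀ i : ι, e x i ≠ 0} ≃ {y : ∀ i : ι, ZMod (a i) // ∀ i : ι, y i ≠ 0} :=
    e.toEquiv.subtypeEquiv (fun x => Iff.rfl)
  have e2 : {y : ∀ i : ι, ZMod (a i) // ∀ i : ι, y i ≠ 0} ≃ ∀ i : ι, {z : ZMod (a i) // z ≠ 0} :=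
    Equiv.subtypePiEquivPi (p := fun (i : ι) (z : ZMod (a i)) => z ≠ 0)
  rw [Fintype.card_congr (e1.trans e2), Fintype.card_pi]
  exact Finset.prod_congr rfl (fun i _ => card_ne_zero_subtype (a i))

/-- For `1 ≤ i ≤ t` and odd `b i`: `2^i * b i ∣ 2^t * m ↔ b i ∣ m`. -/
lemma dvd_key (b : ℕ → ℕ) (t i m : ℕ) (hi1 : 1 ≤ i) (hit : i ≤ t)
    (hodd : Odd (b i)) :
    2 ^ i * b i ∣ 2 ^ t * m ↔ b i ∣ m := by
  constructor
  · intro h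
    have hb : b i ∣ 2 ^ t * m := (dvd_mul_left (b i) (2 ^ i)).trans h
    have hco : Nat.Coprime (b i) (2 ^ t) :=
      Nat.Coprime.pow_right t (hodd.coprime_two_right)
    exact hco.dvd_of_dvd_mul_left hb
  · intro h
    exact mul_dvd_mul (pow_dvd_pow 2 hit) h

end Aux

open Classical in
theorem card_holes (b : ℕ → ℕ)
    (hodd : ∀ i : ℕ, 1 ≤ i → Odd (b i))
    (hgt : ∀ i : ℕ, 1 ≤ i → 1 < b i)
    (hcop : ∀ i j : ℕ, 1 ≤ i → 1 ≤ j → i ≠ j → Nat.Coprime (b i) (b j))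
    (t : ℕ) (ht : 1 ≤ t) :
    ((Finset.Ico (0 : ℤ) (pp b t)).filter
        (fun s => s ∉ Per (eta b) (pp b t))).card =
      ∏ i ∈ Finset.Icc 1 t, (b i - 1) := by
  classical
  have hfc : (Finset.Ico (0 : ℤ) (pp b t)).filter (fun s => s ∉ Per (eta b) (pp b t))
      = (Finset.Ico (0 : ℤ) (pp b t)).filter
          (fun s => (2 : ℤ) ^ t ∣ s ∧ ∀ i ∈ Finset.Icc 1 t, ¬ ((2 : ℤ) ^ i * (b i : ℤ) ∣ s)) :=
    Finset.filter_congr (fun s _ => by rw [not_per_iff b hodd hcop t s])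
  rw [hfc]
  set Nn := ∏ i ∈ Finset.Icc 1 t, b i with hNn
  have himg : (Finset.Ico (0 : ℤ) (pp b t)).filter
          (fun s => (2 : ℤ) ^ t ∣ s ∧ ∀ i ∈ Finset.Icc 1 t, ¬ ((2 : ℤ) ^ i * (b i : ℤ) ∣ s))
      = Finset.image (fun m : ℕ => ((2 ^ t * m : ℕ) : ℤ))
          ((Finset.range Nn).filter (fun m => ∀ i ∈ Finset.Icc 1 t, ¬ b i ∣ m)) := by
    ext s
    simp only [Finset.mem_filter, Finset.mem_Ico, Finset.mem_image, Finset.mem_range]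
    constructor
    · rintro ⟨⟨hs0, hslt⟩, ⟨s1, hs1⟩, hA⟩
      have hs1nn : 0 ≤ s1 := by
        by_contra hneg
        push_neg at hneg
        nlinarith [pow_pos (by norm_num : (0:ℤ) < 2) t, hs1]
      obtain ⟨m, rfl⟩ := Int.eq_ofNat_of_zero_le hs1nn
      refine ⟨m, ⟨?_, ?_⟩, ?_⟩
      · -- m < Nn
        have : s < ((2 ^ t * Nn : ℕ) : ℤ) := by
          rwa [show ((2 ^ t * Nn : ℕ) : ℤ) = ((pp b t : ℕ) : ℤ) by rw [pp, hNn]]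
        rw [hs1] at this
        push_cast at this
        have h2 : (0:ℤ) < 2 ^ t := pow_pos (by norm_num) t
        have := (mul_lt_mul_iff_right₀ h2).mp this
        exact_mod_cast this
      · -- ∀ i, ¬ b i ∣ m
        intro i hi hbm
        refine hA i hi ?_
        obtain ⟨hi1, hi2⟩ := Finset.mem_Icc.mp hi
        have : (2 : ℕ) ^ i * b i ∣ 2 ^ t * m :=
          (dvd_key b t i m hi1 hi2 (hodd i hi1)).mpr hbm
        rw [hs1]
        exact_mod_cast Int.natCast_dvd_natCast.mpr this
      · rw [hs1]; push_cast; ring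
    · rintro ⟨m, ⟨hmlt, hcond⟩, rfl⟩
      have hppc : ((pp b t : ℕ) : ℤ) = ((2 ^ t * Nn : ℕ) : ℤ) := by rw [pp, hNn]
      refine ⟨⟨by positivity, ?_⟩, ⟨(m : ℤ), by push_cast; ring⟩, ?_⟩
      · rw [hppc]
        have h2 : 0 < 2 ^ t := by positivity
        exact_mod_cast (Nat.mul_lt_mul_left h2).mpr hmlt
      · intro i hi hdvd
        obtain ⟨hi1, hi2⟩ := Finset.mem_Icc.mp hi
        have : (2 : ℕ) ^ i * b i ∣ 2 ^ t * m := by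
          have := hdvd
          rw [show ((2 ^ t * m : ℕ) : ℤ) = (((2 : ℕ) ^ t * m : ℕ) : ℤ) from rfl] at this
          exact_mod_cast this
        exact hcond i hi ((dvd_key b t i m hi1 hi2 (hodd i hi1)).mp this)
  rw [himg]
  rw [Finset.card_image_of_injective _ (by
    intro x y hxy
    dsimp only at hxy
    have : 2 ^ t * x = 2 ^ t * y := by exact_mod_cast hxy
    exact Nat.eq_of_mul_eq_mul_left (by positivity) this)]
  exact count_nondiv b t hgt hcop
end

section
/- The Toeplitz sequence η is regular: lim_{t→∞} |Per_{p_t}(η) ∩ [0, p_t)| / p_t = 1. -/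
open scoped BigOperators

-- Key: if `2^t ∤ n` then `n` is a `pp b t`-periodic position of `eta b`.
open Classical in
lemma mem_Per_of_not_dvd (b : ℕ → ℕ) (t : ℕ) (n : ℤ) (h : ¬ ((2:ℤ)^t ∣ n)) :
    n ∈ Per (eta b) (pp b t) := by
  intro k
  have hppdvd : ((2:ℤ)^t ∣ (pp b t : ℤ)) := by
    have : (2:ℕ)^t ∣ pp b t := Dvd.intro _ rfl
    exact_mod_cast Int.natCast_dvd_natCast.mpr this
  have key : ∀ i : ℕ, 1 ≤ i →
      (((2:ℤ)^i * (b i : ℤ) ∣ n + k * (pp b t : ℤ)) ↔ ((2:ℤ)^i * (b i : ℤ) ∣ n)) := by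
    intro i hi
    rcases le_or_gt i t with hle | hlt
    · have hdvd : ((2:ℤ)^i * (b i : ℤ)) ∣ (pp b t : ℤ) := by
        have h1 : (2:ℕ)^i * b i ∣ pp b t :=
          mul_dvd_mul (pow_dvd_pow 2 hle)
            (Finset.dvd_prod_of_mem b (Finset.mem_Icc.mpr ⟨hi, hle⟩))
        exact_mod_cast Int.natCast_dvd_natCast.mpr h1
      exact dvd_add_left (Dvd.dvd.mul_left hdvd k)
    · -- both sides are false since `2^t ∤ n` and `2^t ∤ n + k * pp`
      have h2t : ((2:ℤ)^t ∣ (2:ℤ)^i * (b i : ℤ)) :=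
        dvd_mul_of_dvd_left (pow_dvd_pow 2 hlt.le) _
      constructor
      · intro hd
        exfalso
        have : (2:ℤ)^t ∣ n + k * (pp b t : ℤ) := h2t.trans hd
        have : (2:ℤ)^t ∣ n := by
          have hk : (2:ℤ)^t ∣ k * (pp b t : ℤ) := Dvd.dvd.mul_left hppdvd k
          simpa using (dvd_add_left hk).mp this
        exact h this
      · intro hd
        exact absurd (h2t.trans hd) h
  show eta b (n + k * (pp b t : ℤ)) = eta b n
  unfold eta
  exact if_congr (forall_congr' fun i => imp_congr_right fun hi => not_congr (key i hi)) rfl rfl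

open Classical in
theorem eta_regular (b : ℕ → ℕ)
    (hodd : ∀ i : ℕ, 1 ≤ i → Odd (b i))
    (hgt : ∀ i : ℕ, 1 ≤ i → 1 < b i)
    (hcop : ∀ i j : ℕ, 1 ≤ i → 1 ≤ j → i ≠ j → Nat.Coprime (b i) (b j)) :
    Filter.Tendsto
      (fun t : ℕ =>
        (((Finset.Ico (0 : ℤ) (pp b t)).filter
            (fun n => n ∈ Per (eta b) (pp b t))).card : ℝ) / (pp b t : ℝ))
      Filter.atTop (nhds 1) := by
  -- notation
  set f : ℕ → ℝ := fun t : ℕ =>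
        (((Finset.Ico (0 : ℤ) (pp b t)).filter
            (fun n => n ∈ Per (eta b) (pp b t))).card : ℝ) / (pp b t : ℝ) with hf
  have hP : ∀ t : ℕ, 0 < ∏ i ∈ Finset.Icc 1 t, b i := by
    intro t
    exact Finset.prod_pos fun i hi => lt_trans one_pos (hgt i (Finset.mem_Icc.mp hi).1)
  have hpp : ∀ t : ℕ, 0 < pp b t := fun t => Nat.mul_pos (pow_pos two_pos t) (hP t)
  -- upper bound: f t ≤ 1
  have hub : ∀ t : ℕ, f t ≤ 1 := by
    intro t
    rw [hf]
    have hcard : (((Finset.Ico (0 : ℤ) (pp b t)).filter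
        (fun n => n ∈ Per (eta b) (pp b t))).card : ℝ) ≤ (pp b t : ℝ) := by
      have h1 := Finset.card_filter_le (Finset.Ico (0 : ℤ) (pp b t))
        (fun n => n ∈ Per (eta b) (pp b t))
      have h2 : (Finset.Ico (0 : ℤ) ((pp b t : ℤ))).card = pp b t := by
        rw [Int.card_Ico]; simp
      exact_mod_cast h2 ▸ h1
    exact div_le_one_of_le₀ hcard (by positivity)
  -- lower bound: 1 - (1/2)^t ≤ f t
  have hlb : ∀ t : ℕ, 1 - (1/2:ℝ)^t ≤ f t := by
    intro t
    set P := ∏ i ∈ Finset.Icc 1 t, b i with hPdef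
    have h2t : (0:ℤ) < 2^t := by positivity
    have hcast : ((pp b t : ℤ)) = 2^t * (P:ℤ) := by
      unfold pp; rw [hPdef]; push_cast; ring
    have himg : (Finset.Ico (0 : ℤ) ((pp b t : ℤ))).filter (fun n => (2:ℤ)^t ∣ n)
        = Finset.image (fun m : ℤ => 2^t * m) (Finset.Ico (0:ℤ) (P:ℤ)) := by
      ext n
      simp only [Finset.mem_filter, Finset.mem_Ico, Finset.mem_image]
      constructor
      · rintro ⟨⟨hn0, hnlt⟩, m, rfl⟩
        refine ⟨m, ⟨?_, ?_⟩, rfl⟩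
        · exact le_of_mul_le_mul_left (by simpa using hn0) h2t
        · rw [hcast] at hnlt
          exact lt_of_mul_lt_mul_left hnlt h2t.le
      · rintro ⟨m, ⟨hm0, hmlt⟩, rfl⟩
        refine ⟨⟨mul_nonneg h2t.le hm0, ?_⟩, m, rfl⟩
        rw [hcast]
        exact mul_lt_mul_of_pos_left hmlt h2t
    have hTcard : ((Finset.Ico (0 : ℤ) ((pp b t : ℤ))).filter (fun n => (2:ℤ)^t ∣ n)).card
        = P := by
      rw [himg, Finset.card_image_of_injective _ (mul_right_injective₀ h2t.ne'),
        Int.card_Ico]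
      simp
    have hIcoCard : (Finset.Ico (0 : ℤ) ((pp b t : ℤ))).card = pp b t := by
      rw [Int.card_Ico]; simp
    have hsum := Finset.card_filter_add_card_filter_not
      (s := Finset.Ico (0 : ℤ) ((pp b t : ℤ))) (p := fun n => (2:ℤ)^t ∣ n)
    have hNcard : ((Finset.Ico (0 : ℤ) ((pp b t : ℤ))).filter
        (fun n => ¬ ((2:ℤ)^t ∣ n))).card = pp b t - P := by
      omega
    have hsubset : (Finset.Ico (0 : ℤ) ((pp b t : ℤ))).filter (fun n => ¬ ((2:ℤ)^t ∣ n))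
        ⊆ (Finset.Ico (0 : ℤ) ((pp b t : ℤ))).filter (fun n => n ∈ Per (eta b) (pp b t)) :=
      Finset.monotone_filter_right _ (fun n _ hn => mem_Per_of_not_dvd b t n hn)
    have hcardge : pp b t - P ≤ ((Finset.Ico (0 : ℤ) ((pp b t : ℤ))).filter
        (fun n => n ∈ Per (eta b) (pp b t))).card := by
      rw [← hNcard]; exact Finset.card_le_card hsubset
    have hPle : P ≤ pp b t := by
      have : 1 * P ≤ 2^t * P := Nat.mul_le_mul_right P (Nat.one_le_two_pow)
      simpa [pp] using this
    have hppR : (pp b t : ℝ) = 2^t * (P:ℝ) := by unfold pp; rw [hPdef]; push_cast; ring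
    have hPpos : (0:ℝ) < P := by exact_mod_cast hP t
    have h2R : (0:ℝ) < 2^t := by positivity
    have heq : 1 - (1/2:ℝ)^t = ((pp b t : ℝ) - P) / (pp b t : ℝ) := by
      rw [hppR]
      field_simp
      ring_nf; rw [← mul_pow]; norm_num
    rw [heq, hf]
    have hnum : (pp b t : ℝ) - P ≤ (((Finset.Ico (0 : ℤ) (pp b t)).filter
        (fun n => n ∈ Per (eta b) (pp b t))).card : ℝ) := by
      have := hcardge
      have hcast2 : ((pp b t - P : ℕ) : ℝ) = (pp b t : ℝ) - P := by
        rw [Nat.cast_sub hPle]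
      rw [← hcast2]
      exact_mod_cast this
    have hppRpos : (0:ℝ) < (pp b t : ℝ) := by exact_mod_cast hpp t
    exact div_le_div_of_nonneg_right hnum hppRpos.le
  -- squeeze
  have h1 : Filter.Tendsto (fun t : ℕ => (1:ℝ) - (1/2)^t) Filter.atTop (nhds 1) := by
    have := tendsto_pow_atTop_nhds_zero_of_lt_one (by norm_num : (0:ℝ) ≤ 1/2)
      (by norm_num : (1/2:ℝ) < 1)
    simpa using Filter.Tendsto.const_sub 1 this
  exact tendsto_of_tendsto_of_tendsto_of_le_of_le h1 tendsto_const_nhds hlb hub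
end

section
/- For every t ≥ 1, let I_1 < I_2 < … < I_{s_t} be all holes at level t. Then the minimal cyclic gap between consecutive holes equals 2^t: min({I_{j+1} − I_j : 1 ≤ j ≤ s_t − 1} ∪ {p_t − I_{s_t} + I_1}) = 2^t. In particular, 2^t and 2^{t+1} are holes at level t, and the difference of any two holes at level t is divisible by 2^t. -/
open scoped BigOperators

-- `s` is a hole at level `t`. 
def Hole (b : ℕ → ℕ) (t : ℕ) (s : ℤ) : Prop :=
  0 ≤ s ∧ s < (pp b t : ℤ) ∧ s ∉ Per (eta b) (pp b t)

lemma pp_cast (b : ℕ → ℕ) (t : ℕ) :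
    (pp b t : ℤ) = 2 ^ t * ((∏ i ∈ Finset.Icc 1 t, b i : ℕ) : ℤ) := by
  push_cast [pp]; ring

/-- Every hole at level `t` is divisible by `2^t`. -/
lemma hole_dvd_pow (b : ℕ → ℕ) (t : ℕ) {s : ℤ} (hs : Hole b t s) : (2 : ℤ) ^ t ∣ s := by
  by_contra h2
  apply hs.2.2
  intro k
  have hdvd_p : (2 : ℤ) ^ t ∣ (pp b t : ℤ) := ⟨_, pp_cast b t⟩
  have key : ∀ i : ℕ, 1 ≤ i →
      (((2 : ℤ) ^ i * (b i : ℤ) ∣ s + k * (pp b t : ℤ)) ↔ ((2 : ℤ) ^ i * (b i : ℤ) ∣ s)) := by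
    intro i hi
    rcases le_or_gt i t with hle | hlt
    · have hip : (2 : ℤ) ^ i * (b i : ℤ) ∣ (pp b t : ℤ) := by
        rw [pp_cast]
        exact mul_dvd_mul (pow_dvd_pow 2 hle)
          (Int.natCast_dvd_natCast.mpr (Finset.dvd_prod_of_mem b (Finset.mem_Icc.mpr ⟨hi, hle⟩)))
      constructor
      · intro h
        have := dvd_sub h (hip.mul_left k)
        simpa using this
      · intro h
        exact dvd_add h (hip.mul_left k)
    · have h2i : (2 : ℤ) ^ t ∣ (2 : ℤ) ^ i * (b i : ℤ) :=
        (pow_dvd_pow 2 hlt.le).mul_right _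
      constructor
      · intro h
        have hts : (2 : ℤ) ^ t ∣ s := by
          have := dvd_sub (h2i.trans h) (hdvd_p.mul_left k)
          simpa using this
        exact absurd hts h2
      · intro h
        exact absurd (h2i.trans h) h2
  classical
  simp only [eta]
  exact if_congr (forall_congr' fun i => imp_congr_right fun hi => not_congr (key i hi)) rfl rfl

lemma b_ge_three (b : ℕ → ℕ) (hodd : ∀ i : ℕ, 1 ≤ i → Odd (b i))
    (hgt : ∀ i : ℕ, 1 ≤ i → 1 < b i) {i : ℕ} (hi : 1 ≤ i) : 3 ≤ b i := by
  obtain ⟨c, hc⟩ := hodd i hi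
  have := hgt i hi
  omega

/-- Any multiple `2^t * m` with `0 ≤ m < ∏ b_i` avoiding all `b_i`, `1 ≤ i ≤ t`,
is a hole at level `t`. -/
lemma hole_of_mul (b : ℕ → ℕ)
    (hodd : ∀ i : ℕ, 1 ≤ i → Odd (b i))
    (hgt : ∀ i : ℕ, 1 ≤ i → 1 < b i)
    (hcop : ∀ i j : ℕ, 1 ≤ i → 1 ≤ j → i ≠ j → Nat.Coprime (b i) (b j))
    (t : ℕ) (ht : 1 ≤ t) {m : ℤ} (hm0 : 0 ≤ m)
    (hmP : m < ((∏ i ∈ Finset.Icc 1 t, b i : ℕ) : ℤ))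
    (hnd : ∀ i : ℕ, 1 ≤ i → i ≤ t → ¬ ((b i : ℤ) ∣ m)) :
    Hole b t (2 ^ t * m) := by
  set P : ℕ := ∏ i ∈ Finset.Icc 1 t, b i with hP
  have hPodd : Odd P := by
    refine Finset.prod_induction b Odd (fun a b => Odd.mul) odd_one ?_
    intro i hi
    exact hodd i (Finset.mem_Icc.mp hi).1
  have hPoddZ : Odd ((P : ℕ) : ℤ) := (Int.odd_coe_nat P).mpr hPodd
  have hppz : (pp b t : ℤ) = 2 ^ t * (P : ℤ) := pp_cast b t
  refine ⟨mul_nonneg (by positivity) hm0, ?_, ?_⟩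
  · rw [hppz]
    exact mul_lt_mul_of_pos_left hmP (by positivity)
  · intro hper
    -- a k making the shifted value 1
    have hk1 : eta b (2 ^ t * m + (1 - m) * (pp b t : ℤ)) = 1 := by
      set N : ℤ := m + (1 - m) * (P : ℤ) with hN
      have hNodd : Odd N := by
        obtain ⟨c, hc⟩ := hPoddZ
        exact ⟨c * (1 - m), by rw [hN, hc]; ring⟩
      have heq : 2 ^ t * m + (1 - m) * (pp b t : ℤ) = 2 ^ t * N := by
        rw [hppz, hN]; ring
      rw [heq, eta, if_pos]
      intro i hi hdvd
      rcases le_or_gt i t with hle | hlt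
      · have hbN : (b i : ℤ) ∣ N := by
          have h1 : (b i : ℤ) ∣ 2 ^ t * N := (dvd_mul_left _ _).trans hdvd
          have hco : IsCoprime ((b i : ℤ)) ((2 : ℤ) ^ t) := by
            have : Nat.Coprime (b i) (2 ^ t) :=
              Nat.Coprime.pow_right _ (by simpa using hodd i hi)
            have := Nat.isCoprime_iff_coprime.mpr this
            push_cast at this
            exact this
          exact hco.dvd_of_dvd_mul_left h1
        have hbP : (b i : ℤ) ∣ (P : ℤ) :=
          Int.natCast_dvd_natCast.mpr (Finset.dvd_prod_of_mem b (Finset.mem_Icc.mpr ⟨hi, hle⟩))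
        have : (b i : ℤ) ∣ m := by
          have := dvd_sub hbN (hbP.mul_left (1 - m))
          simpa [hN] using this
        exact hnd i hi hle this
      · have h2N : (2 : ℤ) ∣ N := by
          have h1 : (2 : ℤ) ^ t * 2 ∣ 2 ^ t * N := by
            have : (2 : ℤ) ^ (t + 1) ∣ 2 ^ i := pow_dvd_pow 2 hlt
            calc (2 : ℤ) ^ t * 2 = 2 ^ (t + 1) := by ring
            _ ∣ 2 ^ i := this
            _ ∣ 2 ^ i * (b i : ℤ) := dvd_mul_right _ _
            _ ∣ 2 ^ t * N := hdvd
          exact (mul_dvd_mul_iff_left (a := (2 : ℤ) ^ t) (by positivity)).mp h1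
        obtain ⟨c, hc⟩ := h2N
        obtain ⟨d, hd⟩ := hNodd
        omega
    -- a k making the shifted value 0
    have hco : IsCoprime ((P : ℕ) : ℤ) (2 * (b (t + 1) : ℤ)) := by
      have h1 : Nat.Coprime P (2 * b (t + 1)) := by
        refine Nat.Coprime.mul_right ?_ ?_
        · simpa using hPodd
        · refine Nat.Coprime.prod_left ?_
          intro i hi
          obtain ⟨hi1, hit⟩ := Finset.mem_Icc.mp hi
          exact hcop i (t + 1) hi1 (by omega) (by omega)
      have := Nat.isCoprime_iff_coprime.mpr h1
      push_cast at this
      exact this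
    obtain ⟨u, v, huv⟩ := hco
    set k0 : ℤ := -(m * u) with hk0def
    have hk0 : eta b (2 ^ t * m + k0 * (pp b t : ℤ)) = 0 := by
      have hdvd : (2 : ℤ) ^ (t + 1) * (b (t + 1) : ℤ) ∣ 2 ^ t * m + k0 * (pp b t : ℤ) := by
        refine ⟨m * v, ?_⟩
        rw [hppz, hk0def]
        linear_combination (-(2 : ℤ) ^ t * m) * huv
      rw [eta, if_neg]
      push_neg
      exact ⟨t + 1, by omega, hdvd⟩
    have h1 := hper (1 - m)
    have h0 := hper k0
    rw [hk1] at h1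
    rw [hk0] at h0
    omega

theorem minimal_gap_eq (b : ℕ → ℕ)
    (hodd : ∀ i : ℕ, 1 ≤ i → Odd (b i))
    (hgt : ∀ i : ℕ, 1 ≤ i → 1 < b i)
    (hcop : ∀ i j : ℕ, 1 ≤ i → 1 ≤ j → i ≠ j → Nat.Coprime (b i) (b j))
    (t : ℕ) (ht : 1 ≤ t) :
    IsLeast {d : ℤ | ∃ s s' : ℤ, Hole b t s ∧ Hole b t s' ∧ s ≠ s' ∧
        d = (s' - s) % (pp b t : ℤ)} ((2 : ℤ) ^ t) ∧
      Hole b t ((2 : ℤ) ^ t) ∧ Hole b t ((2 : ℤ) ^ (t + 1)) ∧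
      ∀ s s' : ℤ, Hole b t s → Hole b t s' → (2 : ℤ) ^ t ∣ s - s' := by
  set P : ℕ := ∏ i ∈ Finset.Icc 1 t, b i with hP
  have hPge : 3 ≤ P := by
    have hb1 : b 1 ∣ P := Finset.dvd_prod_of_mem b (Finset.mem_Icc.mpr ⟨le_refl 1, ht⟩)
    have hPpos : 0 < P := by
      refine Finset.prod_pos ?_
      intro i hi
      have := hgt i (Finset.mem_Icc.mp hi).1
      omega
    have := Nat.le_of_dvd hPpos hb1
    have := b_ge_three b hodd hgt (le_refl 1)
    omega
  have hppz : (pp b t : ℤ) = 2 ^ t * (P : ℤ) := pp_cast b t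
  have hpp_pos : (0 : ℤ) < (pp b t : ℤ) := by
    rw [hppz]; positivity
  have hole1 : Hole b t ((2 : ℤ) ^ t) := by
    have := hole_of_mul b hodd hgt hcop t ht (m := 1) zero_le_one
      (by exact_mod_cast by omega)
      (fun i hi hit hdvd => by
        have h1 : (b i : ℤ) = 1 := Int.eq_one_of_dvd_one (by positivity) hdvd
        have := hgt i hi
        omega)
    simpa using this
  have hole2 : Hole b t ((2 : ℤ) ^ (t + 1)) := by
    have := hole_of_mul b hodd hgt hcop t ht (m := 2) (by norm_num)
      (by exact_mod_cast by omega)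
      (fun i hi hit hdvd => by
        have h1 : (b i : ℤ) ≤ 2 := Int.le_of_dvd (by norm_num) hdvd
        have := b_ge_three b hodd hgt hi
        omega)
    have heq : (2 : ℤ) ^ (t + 1) = 2 ^ t * 2 := by ring
    rwa [heq]
  have hdvd_hole : ∀ s s' : ℤ, Hole b t s → Hole b t s' → (2 : ℤ) ^ t ∣ s - s' :=
    fun s s' hs hs' => dvd_sub (hole_dvd_pow b t hs) (hole_dvd_pow b t hs')
  refine ⟨⟨?_, ?_⟩, hole1, hole2, hdvd_hole⟩
  · refine ⟨2 ^ t, 2 ^ (t + 1), hole1, hole2, ?_, ?_⟩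
    · intro h
      have h1 : (2 : ℤ) ^ t < 2 ^ (t + 1) := by
        have h0 : (0 : ℤ) < 2 ^ t := pow_pos two_pos t
        have h2 : (2 : ℤ) ^ (t + 1) = 2 ^ t * 2 := pow_succ 2 t
        linarith
      linarith [h1, h.symm ▸ h1]
    · have h1 : (2 : ℤ) ^ (t + 1) - 2 ^ t = 2 ^ t := by ring
      rw [h1, Int.emod_eq_of_lt (by positivity) ?_]
      rw [hppz]
      nlinarith [pow_pos (zero_lt_two (α := ℤ)) t, (by exact_mod_cast hPge : (3 : ℤ) ≤ (P : ℤ))]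
  · rintro d ⟨s, s', hs, hs', hne, rfl⟩
    have h2t : (2 : ℤ) ^ t ∣ s' - s := dvd_sub (hole_dvd_pow b t hs') (hole_dvd_pow b t hs)
    have h2p : (2 : ℤ) ^ t ∣ (pp b t : ℤ) := ⟨_, hppz⟩
    have hdvd : (2 : ℤ) ^ t ∣ (s' - s) % (pp b t : ℤ) := by
      rw [Int.emod_def]
      exact dvd_sub h2t (h2p.mul_right _)
    have hnonneg : 0 ≤ (s' - s) % (pp b t : ℤ) := Int.emod_nonneg _ (by omega)
    have hne0 : (s' - s) % (pp b t : ℤ) ≠ 0 := by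
      intro h0
      have hpd : (pp b t : ℤ) ∣ s' - s := Int.dvd_of_emod_eq_zero h0
      have habs : |s' - s| < (pp b t : ℤ) := by
        rw [abs_lt]
        constructor
        · linarith [hs.2.1, hs'.1]
        · linarith [hs'.2.1, hs.1]
      have := Int.eq_zero_of_abs_lt_dvd hpd habs
      exact hne (by linarith)
    exact Int.le_of_dvd (lt_of_le_of_ne hnonneg (Ne.symm hne0)) hdvd
end
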